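/- arXiv:1808.09786 — 7 statements merged into one kernel-verified Lean document; each statement's English description precedes it below -/
import Mathlib

section
/- In the virtual pure braid group VP_{n+1}, the elements a_{k,n+1-k} = s_{n-1}s_{n-2}⋯s_k ŝ_{k-1} s_{k-2}⋯s_0(λ_{1,2}) (where ŝ_{k-1} means s_{k-1} is omitted) pairwise commute: a_{k,n+1-k} a_{l,n+1-l} = a_{l,n+1-l} a_{k,n+1-k} for all 1 ≤ k, l ≤ n. -/
/-- Index predicate for the generators `λ_{i j}` of the virtual pure braid group
`VP n`: `1 ≤ i, j ≤ n` and `i ≠ j` (1-based indices). -/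
def VPIdx (n : ℕ) (p : ℕ × ℕ) : Prop :=
  1 ≤ p.1 ∧ p.1 ≤ n ∧ 1 ≤ p.2 ∧ p.2 ≤ n ∧ p.1 ≠ p.2

instance (n : ℕ) (p : ℕ × ℕ) : Decidable (VPIdx n p) := by
  unfold VPIdx; infer_instance

/-- Generators `λ_{i j}`, `1 ≤ i ≠ j ≤ n`. -/
def VPGen (n : ℕ) := {p : ℕ × ℕ // VPIdx n p}

/-- The generator `λ_{i j}` as an element of the free group (junk value `1` out of range). -/
def lamW {n : ℕ} (i j : ℕ) : FreeGroup (VPGen n) :=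
  if h : VPIdx n (i, j) then FreeGroup.of ⟨(i, j), h⟩ else 1

/-- The defining relations of the virtual pure braid group `VP n`:
`λ_{ij}λ_{kl} = λ_{kl}λ_{ij}` and `λ_{ki}λ_{kj}λ_{ij} = λ_{ij}λ_{kj}λ_{ki}`
(distinct letters denote distinct indices). -/
def VPRels (n : ℕ) : Set (FreeGroup (VPGen n)) :=
  {w | ∃ i j k l : ℕ, VPIdx n (i, j) ∧ VPIdx n (k, l) ∧ i ≠ k ∧ i ≠ l ∧ j ≠ k ∧ j ≠ l ∧
      w = lamW i j * lamW k l * (lamW k l * lamW i j)⁻¹} ∪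
  {w | ∃ i j k : ℕ, VPIdx n (i, j) ∧ VPIdx n (k, i) ∧ VPIdx n (k, j) ∧
      w = lamW k i * lamW k j * lamW i j * (lamW i j * lamW k j * lamW k i)⁻¹}

/-- The virtual pure braid group on `n` strands. -/
abbrev VP (n : ℕ) := PresentedGroup (VPRels n)

/-- The generator `λ_{i j}` of `VP n` (junk value `1` out of range). -/
def lam' {n : ℕ} (i j : ℕ) : VP n :=
  if h : VPIdx n (i, j) then PresentedGroup.of ⟨(i, j), h⟩ else 1

/-- The product `λ_{1 l} λ_{2 l} ⋯ λ_{k-1, l}`. -/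
def conjA {n : ℕ} (k l : ℕ) : VP n :=
  ((List.range (k - 1)).map fun j => lam' (j + 1) l).prod

/-- The product `λ_{l 1}⁻¹ λ_{l 2}⁻¹ ⋯ λ_{l, k-1}⁻¹`. -/
def conjB {n : ℕ} (k l : ℕ) : VP n :=
  ((List.range (k - 1)).map fun j => (lam' l (j + 1))⁻¹).prod

/-- `s` is the family of degeneracy (strand-doubling) homomorphisms
`s_i : VP m → VP (m+1)` (`0 ≤ i ≤ m-1`), acting on the generators by the explicit
cabling formulas of Proposition 3.1 of Bardakov–Mikhailov–Wu. -/
def IsCabling (s : ∀ m : ℕ, ℕ → (VP m →* VP (m + 1))) : Prop :=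
  ∀ m k l i : ℕ, 1 ≤ k → k < l → l ≤ m → i < m →
    (s m i (lam' k l) =
      if i + 1 < k then lam' (k + 1) (l + 1)
      else if i + 1 = k then lam' k (l + 1) * lam' (k + 1) (l + 1)
      else if i + 1 < l then lam' k (l + 1)
      else if i + 1 = l then (conjA k l)⁻¹ * lam' k (l + 1) * conjA k l * lam' k l
      else lam' k l) ∧
    (s m i (lam' l k) =
      if i + 1 < k then lam' (l + 1) (k + 1)
      else if i + 1 = k then lam' (l + 1) (k + 1) * lam' (l + 1) k
      else if i + 1 < l then lam' (l + 1) k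
      else if i + 1 = l then lam' l k * ((conjB k l)⁻¹ * lam' (l + 1) k * conjB k l)
      else lam' l k)

/-- `d` is the family of face (strand-deleting) homomorphisms
`d_i : VP (m+1) → VP m` (`0 ≤ i ≤ m`), acting on the generators by the formulas
of Proposition 3.1 of Bardakov–Mikhailov–Wu. -/
def IsFace (d : ∀ m : ℕ, ℕ → (VP (m + 1) →* VP m)) : Prop :=
  ∀ m k l i : ℕ, 1 ≤ k → k < l → l ≤ m + 1 → i ≤ m →
    (d m i (lam' k l) =
      if i + 1 < k then lam' (k - 1) (l - 1)
      else if i + 1 = k then 1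
      else if i + 1 < l then lam' k (l - 1)
      else if i + 1 = l then 1
      else lam' k l) ∧
    (d m i (lam' l k) =
      if i + 1 < k then lam' (l - 1) (k - 1)
      else if i + 1 = k then 1
      else if i + 1 < l then lam' (l - 1) k
      else if i + 1 = l then 1
      else lam' l k)

/-- `ι` is the family of trivial-strand inclusions `VP m → VP (m+1)`, `λ_{ij} ↦ λ_{ij}`. -/
def IsIncl (ι : ∀ m : ℕ, VP m →* VP (m + 1)) : Prop :=
  ∀ m i j : ℕ, VPIdx m (i, j) → ι m (lam' i j) = lam' i j

/-- Iterated trivial-strand inclusion `VP p → VP (p + q)`. -/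
def iotaIter (ι : ∀ m : ℕ, VP m →* VP (m + 1)) (p : ℕ) : (q : ℕ) → (VP p →* VP (p + q))
  | 0 => MonoidHom.id (VP p)
  | q + 1 => (ι (p + q)).comp (iotaIter ι p q)

/-- The composite `s_{m} s_{m-1} ⋯ s_{skip+1} ŝ_{skip} s_{skip-1} ⋯ s_0 : VP 2 → VP (m+2)`
of `m` degeneracies with the index `skip` omitted. -/
def chain (s : ∀ m : ℕ, ℕ → (VP m →* VP (m + 1))) (skip : ℕ) :
    (m : ℕ) → (VP 2 →* VP (m + 2))
  | 0 => MonoidHom.id (VP 2)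
  | m + 1 => (s (m + 2) (if skip ≤ m then m + 1 else m)).comp (chain s skip m)

/-- The cabled element `a_{k, n+2-k} = s_{n+1-1}⋯s_k ŝ_{k-1} s_{k-2}⋯s_0(λ_{1,2}) ∈ VP (n+2)`. -/
def aa (s : ∀ m : ℕ, ℕ → (VP m →* VP (m + 1))) (n k : ℕ) : VP (n + 2) :=
  chain s (k - 1) n (lam' 1 2)

/-- The cabled element `b_{k, n+2-k} = s_{n+1-1}⋯s_k ŝ_{k-1} s_{k-2}⋯s_0(λ_{2,1}) ∈ VP (n+2)`. -/
def bb (s : ∀ m : ℕ, ℕ → (VP m →* VP (m + 1))) (n k : ℕ) : VP (n + 2) :=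
  chain s (k - 1) n (lam' 2 1)

/-- The simplicial subgroups `T_m ≤ VP (m+1)`:
`T_0 = 1`, `T_1 = VP 2`, `T_{m+2} = ⟨s_0(T_{m+1}), …, s_{m+1}(T_{m+1})⟩`. -/
def TT (s : ∀ m : ℕ, ℕ → (VP m →* VP (m + 1))) : (m : ℕ) → Subgroup (VP (m + 1))
  | 0 => ⊥
  | 1 => ⊤
  | m + 2 => ⨆ i ∈ Finset.range (m + 2), Subgroup.map (s (m + 2) i) (TT s (m + 1))

/-! ### Auxiliary development -/

section Aux

variable {N : ℕ}

lemma rel_one {w : FreeGroup (VPGen N)} (h : w ∈ VPRels N) :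
    PresentedGroup.mk (VPRels N) w = 1 :=
  (QuotientGroup.eq_one_iff _).mpr (Subgroup.subset_normalClosure h)

lemma lam'_eq_mk (i j : ℕ) : (lam' i j : VP N) = PresentedGroup.mk (VPRels N) (lamW i j) := by
  unfold lam' lamW
  by_cases h : VPIdx N (i, j)
  · rw [dif_pos h, dif_pos h]; rfl
  · rw [dif_neg h, dif_neg h, map_one]

lemma comm1 {a b c d : ℕ} (hac : a ≠ c) (had : a ≠ d) (hbc : b ≠ c) (hbd : b ≠ d) :
    Commute (lam' a b : VP N) (lam' c d) := by
  by_cases h1 : VPIdx N (a, b)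
  · by_cases h2 : VPIdx N (c, d)
    · have h := rel_one (N := N)
        (Or.inl ⟨a, b, c, d, h1, h2, hac, had, hbc, hbd, rfl⟩)
      simp only [map_mul, map_inv, ← lam'_eq_mk] at h
      exact mul_inv_eq_one.mp h
    · have : (lam' c d : VP N) = 1 := dif_neg h2
      rw [this]; exact Commute.one_right _
  · have : (lam' a b : VP N) = 1 := dif_neg h1
    rw [this]; exact Commute.one_left _

lemma mixed {i j k : ℕ} (h1 : VPIdx N (i, j)) (h2 : VPIdx N (k, i)) (h3 : VPIdx N (k, j)) :
    (lam' k i : VP N) * lam' k j * lam' i j = lam' i j * lam' k j * lam' k i := by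
  have h := rel_one (N := N) (Or.inr ⟨i, j, k, h1, h2, h3, rfl⟩)
  simp only [map_mul, map_inv, ← lam'_eq_mk] at h
  exact mul_inv_eq_one.mp h

/-- `rr k t = λ_{1t} λ_{2t} ⋯ λ_{kt}`. -/
def rr (k t : ℕ) : VP N := ((List.range k).map fun i => lam' (i + 1) t).prod

lemma rr_zero (t : ℕ) : (rr 0 t : VP N) = 1 := rfl

lemma rr_succ (k t : ℕ) : (rr (k + 1) t : VP N) = rr k t * lam' (k + 1) t := by
  unfold rr
  rw [List.range_succ, List.map_append, List.prod_append]
  simp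

lemma conjA_eq_rr (k l : ℕ) : (conjA k l : VP N) = rr (k - 1) l := rfl

/-- descending product of rows: `Bc k c = rr k (k+c) * rr k (k+c-1) * ⋯ * rr k (k+1)`. -/
def Bc (k : ℕ) : ℕ → VP N
  | 0 => 1
  | c + 1 => rr k (k + c + 1) * Bc k c

lemma Bc_succ (k c : ℕ) : (Bc k (c + 1) : VP N) = rr k (k + c + 1) * Bc k c := rfl

/-- `qq k t c = λ_{k+1,t} λ_{k+2,t} ⋯ λ_{k+c,t}`. -/
def qq (k t : ℕ) : ℕ → VP N
  | 0 => 1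
  | c + 1 => qq k t c * lam' (k + c + 1) t

lemma qq_succ (k t c : ℕ) : (qq k t (c + 1) : VP N) = qq k t c * lam' (k + c + 1) t := rfl

lemma comm_lam_rr {a b k t : ℕ} (h : ∀ i, 1 ≤ i → i ≤ k → a ≠ i ∧ b ≠ i)
    (hat : a ≠ t) (hbt : b ≠ t) : Commute (lam' a b : VP N) (rr k t) := by
  induction k with
  | zero => rw [rr_zero]; exact Commute.one_right _
  | succ k ih =>
    rw [rr_succ]
    exact (ih fun i h1 h2 => h i h1 (by omega)).mul_right
      (comm1 (h (k + 1) (by omega) le_rfl).1 hat (h (k + 1) (by omega) le_rfl).2 hbt)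

lemma comm_lam_Bc {a b k c : ℕ} (ha : k + c < a) (hb : k + c < b) :
    Commute (lam' a b : VP N) (Bc k c) := by
  induction c with
  | zero => exact Commute.one_right _
  | succ c ih =>
    rw [Bc_succ]
    exact (comm_lam_rr (fun i h1 h2 => ⟨by omega, by omega⟩) (by omega) (by omega)).mul_right
      (ih (by omega) (by omega))

lemma comm_rr_qq {k j t c : ℕ} (hj : k + c < j) (hjt : j ≠ t) (hkt : k < t) :
    Commute (rr k j : VP N) (qq k t c) := by
  induction c with
  | zero => exact Commute.one_right _
  | succ c ih =>
    rw [qq_succ]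
    exact (ih (by omega)).mul_right
      ((comm_lam_rr (fun i h1 h2 => ⟨by omega, by omega⟩) (by omega) (Ne.symm hjt)).symm)

lemma mul3_ext {G : Type*} [Group G] {a b c d e f : G} (h : a * b * c = d * e * f) (z : G) :
    a * (b * (c * z)) = d * (e * (f * z)) := by
  have h2 := congrArg (· * z) h
  simpa [mul_assoc] using h2

lemma lemH {j t : ℕ} (hjt : j ≠ t) (hj1 : 1 ≤ j) (hjN : j ≤ N) (ht1 : 1 ≤ t) (htN : t ≤ N) :
    ∀ k, k < j → k < t →
      (rr k j : VP N) * rr k t * lam' j t = lam' j t * rr k t * rr k j := by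
  intro k
  induction k with
  | zero => intro _ _; rw [rr_zero, rr_zero]; group
  | succ k ih =>
    intro hkj hkt
    have hidx1 : VPIdx N (j, t) := ⟨hj1, hjN, ht1, htN, hjt⟩
    have hidx2 : VPIdx N (k + 1, j) := ⟨by omega, by omega, hj1, hjN, by omega⟩
    have hidx3 : VPIdx N (k + 1, t) := ⟨by omega, by omega, ht1, htN, by omega⟩
    have hmix := mixed hidx1 hidx2 hidx3
    have c1 : Commute (lam' (k + 1) j : VP N) (rr k t) :=
      comm_lam_rr (fun i h1 h2 => ⟨by omega, by omega⟩) (by omega) hjt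
    have c2 : Commute (lam' (k + 1) t : VP N) (rr k j) :=
      comm_lam_rr (fun i h1 h2 => ⟨by omega, by omega⟩) (by omega) (Ne.symm hjt)
    have ih' := mul3_ext (ih (by omega) (by omega)) (lam' (k + 1) t * lam' (k + 1) j)
    have hmix' : (lam' (k+1) j : VP N) * (lam' (k+1) t * lam' j t)
        = lam' j t * (lam' (k+1) t * lam' (k+1) j) := by
      simpa [mul_assoc] using hmix
    rw [rr_succ, rr_succ]
    simp only [mul_assoc]
    rw [c1.left_comm, hmix', ih', (c2.symm).left_comm]

lemma lemG {k t : ℕ} (htN : t ≤ N) (ht1 : 1 ≤ t) :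
    ∀ c, k + c < t → (Bc k c : VP N) * rr k t * qq k t c = qq k t c * rr k t * Bc k c := by
  intro c
  induction c with
  | zero => intro _; show (1 : VP N) * rr k t * 1 = 1 * rr k t * 1; rfl
  | succ c ih =>
    intro hct
    have hH := lemH (N := N) (j := k + c + 1) (t := t) (by omega) (by omega) (by omega)
      ht1 htN k (by omega) (by omega)
    have c1 : Commute (lam' (k + c + 1) t : VP N) (Bc k c) := comm_lam_Bc (by omega) (by omega)
    have c2 : Commute (rr k (k + c + 1) : VP N) (qq k t c) :=
      comm_rr_qq (by omega) (by omega) (by omega)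
    have ih' := mul3_ext (ih (by omega)) (lam' (k + c + 1) t)
    have hH' := mul3_ext hH (Bc k c)
    rw [Bc_succ, qq_succ]
    simp only [mul_assoc]
    rw [ih', (c1.symm).eq, c2.left_comm, hH']

lemma rr_split {k t : ℕ} : ∀ c, (rr (k + c) t : VP N) = rr k t * qq k t c
  | 0 => (mul_one _).symm
  | c + 1 => by
    rw [show k + (c + 1) = (k + c) + 1 from rfl, rr_succ, rr_split c, qq_succ, mul_assoc]

lemma finalcomm {k d : ℕ} (h2 : k + d + 3 ≤ N) :
    (Bc (k + 1) (d + 2) : VP N) * rr (k + d + 2) (k + d + 3)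
      = rr (k + d + 2) (k + d + 3) * Bc (k + 1) (d + 2) := by
  have e1 : k + d + 2 = (k + 1) + (d + 1) := by omega
  rw [e1, rr_split (d + 1)]
  have e2 : (Bc (k + 1) (d + 2) : VP N)
      = rr (k + 1) (k + d + 3) * Bc (k + 1) (d + 1) := by
    rw [Bc_succ]
    congr 2
    omega
  have hG := lemG (N := N) (k := k + 1) (t := k + d + 3) h2 (by omega) (d + 1) (by omega)
  have hG' : (Bc (k + 1) (d + 1) : VP N) * (rr (k + 1) (k + d + 3) * qq (k + 1) (k + d + 3) (d + 1))
      = qq (k + 1) (k + d + 3) (d + 1) * (rr (k + 1) (k + d + 3) * Bc (k + 1) (d + 1)) := by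
    simpa [mul_assoc] using hG
  rw [e2]
  simp only [mul_assoc]
  rw [hG']

end Aux

section Chain

variable (s : ∀ m : ℕ, ℕ → (VP m →* VP (m + 1))) (hs : IsCabling s)
include hs

lemma s_fix_lam {M a b : ℕ} (ha : 1 ≤ a) (hab : a < b) (hbM : b ≤ M) :
    s (M + 1) M (lam' a b) = lam' a b := by
  have h := (hs (M + 1) a b M ha hab (by omega) (by omega)).1
  rw [if_neg (by omega), if_neg (by omega), if_neg (by omega), if_neg (by omega)] at h
  exact h

lemma s_fix_rr {M j b : ℕ} (hjb : j < b) (hbM : b ≤ M) :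
    s (M + 1) M (rr j b) = rr j b := by
  induction j with
  | zero => rw [rr_zero, map_one, rr_zero]
  | succ j ih =>
    rw [rr_succ, map_mul, ih (by omega), s_fix_lam s hs (by omega) hjb hbM, ← rr_succ]

lemma s_fix_Bc {M k c : ℕ} (h : k + c ≤ M) :
    s (M + 1) M (Bc k c) = Bc k c := by
  induction c with
  | zero => show s (M + 1) M 1 = 1; exact map_one _
  | succ c ih =>
    rw [Bc_succ, map_mul, ih (by omega), s_fix_rr s hs (by omega) (by omega), ← Bc_succ]

lemma s_top {M j : ℕ} (hj : j ≤ M) :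
    s (M + 1) M (rr j (M + 1)) = rr j (M + 2) * rr j (M + 1) := by
  induction j with
  | zero => rw [rr_zero, map_one, rr_zero, rr_zero, one_mul]
  | succ j ih =>
    have h := (hs (M + 1) (j + 1) (M + 1) M (by omega) (by omega) le_rfl (by omega)).1
    rw [if_neg (by omega), if_neg (by omega), if_neg (by omega), if_pos rfl] at h
    have hconj : (conjA (j + 1) (M + 1) : VP (M + 2)) = rr j (M + 1) := rfl
    rw [rr_succ, map_mul, ih (by omega), h, hconj, rr_succ, rr_succ]
    group

lemma s_mid_rr {M j : ℕ} (hj : j ≤ M) :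
    s (M + 2) M (rr j (M + 2)) = rr j (M + 3) := by
  induction j with
  | zero => rw [rr_zero, map_one, rr_zero]
  | succ j ih =>
    have h := (hs (M + 2) (j + 1) (M + 2) M (by omega) (by omega) le_rfl (by omega)).1
    rw [if_neg (by omega), if_neg (by omega), if_pos (by omega)] at h
    rw [rr_succ, map_mul, ih (by omega), h, rr_succ]

lemma s_step1 {M : ℕ} :
    s (M + 2) M (rr (M + 1) (M + 2)) = rr (M + 2) (M + 3) := by
  have h := (hs (M + 2) (M + 1) (M + 2) M (by omega) (by omega) le_rfl (by omega)).1
  rw [if_neg (by omega), if_pos rfl] at h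
  rw [rr_succ, map_mul, s_mid_rr s hs le_rfl, h, rr_succ, rr_succ, mul_assoc]

lemma chain_noskip : ∀ m skip, m ≤ skip →
    chain s skip m (lam' 1 2) = (rr (m + 1) (m + 2) : VP (m + 2)) := by
  intro m
  induction m with
  | zero =>
    intro skip _
    show (lam' 1 2 : VP 2) = rr 1 2
    rw [rr_succ, rr_zero, one_mul]
  | succ m ih =>
    intro skip hsk
    show s (m + 2) (if skip ≤ m then m + 1 else m) (chain s skip m (lam' 1 2)) = _
    rw [if_neg (by omega), ih skip (by omega)]
    exact s_step1 s hs

lemma chain_skip (k' : ℕ) : ∀ d,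
    chain s k' (k' + d) (lam' 1 2) = (Bc (k' + 1) (d + 1) : VP (k' + d + 2)) := by
  intro d
  induction d with
  | zero =>
    show chain s k' k' (lam' 1 2) = (Bc (k' + 1) 1 : VP (k' + 2))
    rw [chain_noskip s hs k' k' le_rfl]
    show (rr (k' + 1) (k' + 2) : VP (k' + 2)) = rr (k' + 1) (k' + 2) * 1
    rw [mul_one]
  | succ d ih =>
    show s (k' + d + 2) (if k' ≤ k' + d then k' + d + 1 else k' + d)
      (chain s k' (k' + d) (lam' 1 2)) = _
    rw [if_pos (by omega), ih, Bc_succ, map_mul]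
    have e1 : k' + 1 + d + 1 = k' + d + 2 := by omega
    rw [e1]
    rw [s_top s hs (M := k' + d + 1) (j := k' + 1) (by omega),
      s_fix_Bc s hs (by omega)]
    rw [Bc_succ (k' + 1) (d + 1), Bc_succ (k' + 1) d, e1]
    have e2 : k' + 1 + (d + 1) + 1 = k' + d + 3 := by omega
    rw [e2, mul_assoc]

lemma key (n k' : ℕ) (hk2 : k' ≤ n) :
    aa s (n + 1) (k' + 1) * aa s (n + 1) (n + 2)
      = aa s (n + 1) (n + 2) * aa s (n + 1) (k' + 1) := by
  obtain ⟨d', rfl⟩ : ∃ d', n = k' + d' := ⟨n - k', by omega⟩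
  have hY : aa s (k' + d' + 1) (k' + d' + 2) = (rr (k' + d' + 2) (k' + d' + 3) : VP (k' + d' + 3)) := by
    show chain s (k' + d' + 2 - 1) (k' + d' + 1) (lam' 1 2) = _
    exact chain_noskip s hs (k' + d' + 1) (k' + d' + 1) le_rfl
  have hX : aa s (k' + d' + 1) (k' + 1) = (Bc (k' + 1) (d' + 2) : VP (k' + d' + 3)) := by
    show chain s (k' + 1 - 1) (k' + d' + 1) (lam' 1 2) = _
    exact chain_skip s hs k' (d' + 1)
  rw [hX, hY, finalcomm (by omega)]

end Chain

/-- (Lemma 1.1, first half.) In `VP (n+2)` (the virtual pure braid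
group `VP_{N+1}` with `N = n+1`), the cabled elements
`a_{k, N+1-k} = s_{N-1}⋯s_k ŝ_{k-1} s_{k-2}⋯s_0(λ_{1,2})` pairwise commute for
`1 ≤ k, l ≤ N`. -/
theorem aa_comm (s : ∀ m : ℕ, ℕ → (VP m →* VP (m + 1))) (hs : IsCabling s)
    (n k l : ℕ) (hk1 : 1 ≤ k) (hk2 : k ≤ n + 1) (hl1 : 1 ≤ l) (hl2 : l ≤ n + 1) :
    aa s n k * aa s n l = aa s n l * aa s n k := by
  induction n generalizing k l with
  | zero =>
    have hk : k = 1 := by omega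
    have hl : l = 1 := by omega
    subst hk; subst hl; rfl
  | succ n ih =>
    by_cases hk : k ≤ n + 1 <;> by_cases hl : l ≤ n + 1
    · have ek : aa s (n + 1) k = s (n + 2) (n + 1) (aa s n k) := by
        show (s (n + 2) (if k - 1 ≤ n then n + 1 else n)) (chain s (k - 1) n (lam' 1 2)) = _
        rw [if_pos (by omega : k - 1 ≤ n)]
        rfl
      have el : aa s (n + 1) l = s (n + 2) (n + 1) (aa s n l) := by
        show (s (n + 2) (if l - 1 ≤ n then n + 1 else n)) (chain s (l - 1) n (lam' 1 2)) = _
        rw [if_pos (by omega : l - 1 ≤ n)]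
        rfl
      rw [ek, el, ← map_mul, ih k l hk1 hk hl1 hl, map_mul]
    · have hl' : l = n + 2 := by omega
      obtain ⟨k', rfl⟩ : ∃ k', k = k' + 1 := ⟨k - 1, by omega⟩
      subst hl'
      exact key s hs n k' (by omega)
    · have hk' : k = n + 2 := by omega
      obtain ⟨l', rfl⟩ : ∃ l', l = l' + 1 := ⟨l - 1, by omega⟩
      subst hk'
      exact (key s hs n l' (by omega)).symm
    · have hk' : k = n + 2 := by omega
      have hl' : l = n + 2 := by omega
      subst hk'; subst hl'; rfl
end

section
/- In VP_n (n ≥ 3), with a_{k,l} the cablings of λ_{1,2}, the following identities hold: a_{n-1,1} = λ_{1n}λ_{2n}⋯λ_{n-1,n}; a_{n-k,k} = λ_{1n}λ_{2n}⋯λ_{n-k,n} · a_{n-k,k-1} for 1 < k < n; and a_{1,n-1} = λ_{1n} · a_{1,n-2} (where a_{n-k,k-1} ∈ VP_{n-1} is included in VP_n by adding a trivial strand at the end). -/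
section AaAux

variable (s : ∀ m : ℕ, ℕ → (VP m →* VP (m + 1)))

/-- Block `B_c = λ_{1,c} λ_{2,c} ⋯ λ_{t,c}`. -/
def blkE (n t c : ℕ) : VP n := ((List.range t).map fun j => lam' (j + 1) c).prod

/-- The word `B_{t+N} B_{t+N-1} ⋯ B_{t+1}` (each block of length `t`). -/
def wrd (n t : ℕ) : ℕ → VP n
  | 0 => 1
  | N + 1 => blkE n t (t + 1 + N) * wrd n t N

lemma blkE_succ (n t c : ℕ) : blkE n (t + 1) c = blkE n t c * lam' (t + 1) c := by
  simp [blkE, List.range_succ]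

lemma wrd_succ (n t N : ℕ) : wrd n t (N + 1) = blkE n t (t + 1 + N) * wrd n t N := rfl

lemma s_lam_fix (hs : IsCabling s) (n i k c : ℕ) (h1 : 1 ≤ k) (h2 : k < c) (h3 : c ≤ i) (h4 : i < n) :
    s n i (lam' k c) = lam' k c := by
  have h := (hs n k c i h1 h2 (le_trans h3 (le_of_lt h4)) h4).1
  rw [h, if_neg (by omega), if_neg (by omega), if_neg (by omega), if_neg (by omega)]

lemma s_lam_mid (hs : IsCabling s) (n i k c : ℕ) (h1 : 1 ≤ k) (h2 : k < c) (hk : k ≤ i) (hc : i + 1 < c)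
    (h3 : c ≤ n) (h4 : i < n) :
    s n i (lam' k c) = lam' k (c + 1) := by
  have h := (hs n k c i h1 h2 h3 h4).1
  rw [h, if_neg (by omega), if_neg (by omega), if_pos hc]

lemma s_blk_fix (hs : IsCabling s) (n i t c : ℕ) (h2 : t < c) (h3 : c ≤ i) (h4 : i < n) :
    s n i (blkE n t c) = blkE (n + 1) t c := by
  unfold blkE
  rw [map_list_prod, List.map_map]
  congr 1
  refine List.map_congr_left ?_
  intro j hj
  rw [List.mem_range] at hj
  exact s_lam_fix s hs n i (j + 1) c (by omega) (by omega) h3 h4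

lemma s_blk_mid (hs : IsCabling s) (n t : ℕ) (ht : t ≤ n) :
    s (n + 2) n (blkE (n + 2) t (n + 2)) = blkE (n + 3) t (n + 3) := by
  unfold blkE
  rw [map_list_prod, List.map_map]
  congr 1
  refine List.map_congr_left ?_
  intro j hj
  rw [List.mem_range] at hj
  have := s_lam_mid s hs (n + 2) n (j + 1) (n + 2) (by omega) (by omega) (by omega)
    (by omega) le_rfl (by omega)
  simpa using this

lemma chain_top (hs : IsCabling s) (n skip : ℕ) (h : n ≤ skip) :
    chain s skip n (lam' 1 2) = blkE (n + 2) (n + 1) (n + 2) := by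
  induction n with
  | zero =>
      show lam' 1 2 = blkE 2 1 2
      simp [blkE, List.range_succ]
  | succ n ih =>
      show (s (n + 2) (if skip ≤ n then n + 1 else n)) (chain s skip n (lam' 1 2)) =
        blkE (n + 3) (n + 2) (n + 3)
      rw [if_neg (by omega), ih (by omega), blkE_succ, map_mul, s_blk_mid s hs n n le_rfl]
      have h2 := (hs (n + 2) (n + 1) (n + 2) n (by omega) (by omega) le_rfl (by omega)).1
      rw [if_neg (by omega), if_pos rfl] at h2
      rw [h2]
      show blkE (n + 3) n (n + 3) * (lam' (n + 1) (n + 3) * lam' (n + 2) (n + 3)) =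
        blkE (n + 3) (n + 2) (n + 3)
      rw [blkE_succ, blkE_succ, mul_assoc]

lemma s_wrd_fix (hs : IsCabling s) (n t : ℕ) :
    ∀ N, t + N ≤ n + 1 → s (n + 2) (n + 1) (wrd (n + 2) t N) = wrd (n + 3) t N
  | 0, _ => by
      show s (n + 2) (n + 1) 1 = 1
      exact map_one _
  | N + 1, h => by
      rw [wrd_succ, wrd_succ, map_mul, s_wrd_fix hs n t N (by omega),
        s_blk_fix s hs (n + 2) (n + 1) t (t + 1 + N) (by omega) (by omega) (by omega)]

lemma s_blk_top (hs : IsCabling s) (n t : ℕ) (ht : t ≤ n + 1) :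
    s (n + 2) (n + 1) (blkE (n + 2) t (n + 2)) =
      blkE (n + 3) t (n + 3) * blkE (n + 3) t (n + 2) := by
  induction t with
  | zero =>
      show s (n + 2) (n + 1) (blkE (n + 2) 0 (n + 2)) = _
      simp [blkE]
  | succ t ih =>
      rw [blkE_succ, map_mul, ih (by omega)]
      have h := (hs (n + 2) (t + 1) (n + 2) (n + 1) (by omega) (by omega) le_rfl (by omega)).1
      rw [if_neg (by omega), if_neg (by omega), if_neg (by omega),
        if_pos (show n + 1 + 1 = n + 2 by omega)] at h
      rw [h]
      show blkE (n + 3) t (n + 3) * blkE (n + 3) t (n + 2) *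
          ((blkE (n + 3) t (n + 2))⁻¹ * lam' (t + 1) (n + 3) * blkE (n + 3) t (n + 2) *
            lam' (t + 1) (n + 2)) =
        blkE (n + 3) (t + 1) (n + 3) * blkE (n + 3) (t + 1) (n + 2)
      rw [blkE_succ, blkE_succ]
      group

/-- Closed formula: `a_{t, n+2-t} = B_{n+2} B_{n+1} ⋯ B_{t+1}` (blocks of length `t`). -/
lemma aa_formula (hs : IsCabling s) :
    ∀ n t : ℕ, 1 ≤ t → t ≤ n + 1 → aa s n t = wrd (n + 2) t (n + 2 - t) := by
  intro n
  induction n with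
  | zero =>
      intro t h1 h2
      have ht : t = 1 := by omega
      subst ht
      show lam' 1 2 = wrd 2 1 (2 - 1)
      rw [show 2 - 1 = 1 from rfl, wrd_succ]
      show lam' 1 2 = blkE 2 1 2 * 1
      simp [blkE, List.range_succ]
  | succ n ih =>
      intro t h1 h2
      rcases Nat.lt_or_ge t (n + 2) with hlt | hge
      · -- t ≤ n + 1
        have step : aa s (n + 1) t = s (n + 2) (n + 1) (aa s n t) := by
          show (s (n + 2) (if t - 1 ≤ n then n + 1 else n)) (chain s (t - 1) n (lam' 1 2)) =
            s (n + 2) (n + 1) (chain s (t - 1) n (lam' 1 2))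
          rw [if_pos (by omega)]
        rw [step, ih t h1 (by omega)]
        obtain ⟨N, hN⟩ : ∃ N, n + 2 - t = N + 1 := ⟨n + 1 - t, by omega⟩
        rw [hN, show n + 1 + 2 - t = N + 1 + 1 by omega, wrd_succ, wrd_succ, wrd_succ, map_mul,
          s_wrd_fix s hs n t N (by omega),
          show t + 1 + N = n + 2 by omega, show t + 1 + (N + 1) = n + 3 by omega,
          s_blk_top s hs n t (by omega), mul_assoc]
      · -- t = n + 2
        have ht : t = n + 2 := by omega
        subst ht
        rw [show n + 1 + 2 - (n + 2) = 1 by omega]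
        have := chain_top s hs (n + 1) (n + 2 - 1) (by omega)
        show chain s (n + 2 - 1) (n + 1) (lam' 1 2) = blkE (n + 3) (n + 2) (n + 3) * 1
        rw [this, mul_one]

lemma iota_blk (ι : ∀ m : ℕ, VP m →* VP (m + 1)) (hι : IsIncl ι) (m t c : ℕ)
    (h2 : t < c) (h3 : c ≤ m) :
    ι m (blkE m t c) = blkE (m + 1) t c := by
  unfold blkE
  rw [map_list_prod, List.map_map]
  congr 1
  refine List.map_congr_left ?_
  intro j hj
  rw [List.mem_range] at hj
  exact hι m (j + 1) c ⟨by omega, by omega, by omega, by omega, by omega⟩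

lemma iota_wrd (ι : ∀ m : ℕ, VP m →* VP (m + 1)) (hι : IsIncl ι) (m t : ℕ) :
    ∀ N, t + N ≤ m → ι m (wrd m t N) = wrd (m + 1) t N
  | 0, _ => by
      show ι m 1 = 1
      exact map_one _
  | N + 1, h => by
      rw [wrd_succ, wrd_succ, map_mul, iota_wrd ι hι m t N (by omega),
        iota_blk ι hι m t (t + 1 + N) (by omega) (by omega)]

lemma aa_main2 (hs : IsCabling s) (ι : ∀ m : ℕ, VP m →* VP (m + 1)) (hι : IsIncl ι)
    (m t : ℕ) (h1 : 1 ≤ t) (h2 : t ≤ m + 1) :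
    aa s (m + 1) t = blkE (m + 3) t (m + 3) * ι (m + 2) (aa s m t) := by
  obtain ⟨N, hN⟩ : ∃ N, m + 2 - t = N + 1 := ⟨m + 1 - t, by omega⟩
  rw [aa_formula s hs (m + 1) t h1 (by omega), aa_formula s hs m t h1 h2,
    show m + 1 + 2 - t = N + 1 + 1 by omega, hN, wrd_succ,
    show t + 1 + (N + 1) = m + 3 by omega,
    iota_wrd ι hι (m + 2) t (N + 1) (by omega)]

end AaAux

/-- (Formula (3.1).) In `VP n` with `n = m + 3 ≥ 3`, writing
`a_{k,l}` for the cablings of `λ_{1,2}` (so `a_{k, n-k} = aa s (m+1) k ∈ VP n` and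
`a_{k, n-1-k} = aa s m k ∈ VP (n-1)`, included in `VP n` via `ι`):
`a_{n-1,1} = λ_{1n}λ_{2n}⋯λ_{n-1,n}`;
`a_{n-k,k} = λ_{1n}λ_{2n}⋯λ_{n-k,n} · a_{n-k,k-1}` for `1 < k < n`; and
`a_{1,n-1} = λ_{1n} · a_{1,n-2}`. -/
theorem aa_recursion (s : ∀ m : ℕ, ℕ → (VP m →* VP (m + 1)))
    (ι : ∀ m : ℕ, VP m →* VP (m + 1)) (hs : IsCabling s) (hι : IsIncl ι) (m : ℕ) :
    (aa s (m + 1) (m + 2) =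
      ((List.range (m + 2)).map fun j => (lam' (j + 1) (m + 3) : VP (m + 3))).prod) ∧
    (∀ k : ℕ, 1 < k → k < m + 3 →
      aa s (m + 1) (m + 3 - k) =
        ((List.range (m + 3 - k)).map fun j => (lam' (j + 1) (m + 3) : VP (m + 3))).prod *
          ι (m + 2) (aa s m (m + 3 - k))) ∧
    (aa s (m + 1) 1 = (lam' 1 (m + 3) : VP (m + 3)) * ι (m + 2) (aa s m 1)) := by
  refine ⟨?_, ?_, ?_⟩
  · have h := aa_formula s hs (m + 1) (m + 2) (by omega) (by omega)
    rw [show m + 1 + 2 - (m + 2) = 1 by omega] at h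
    rw [h]
    show blkE (m + 3) (m + 2) (m + 3) * 1 = blkE (m + 3) (m + 2) (m + 3)
    rw [mul_one]
  · intro k hk1 hk2
    rw [aa_main2 s hs ι hι m (m + 3 - k) (by omega) (by omega)]
    rfl
  · rw [aa_main2 s hs ι hι m 1 le_rfl (by omega)]
    show lam' 1 (m + 3) * 1 * ι (m + 2) (aa s m 1) = lam' 1 (m + 3) * ι (m + 2) (aa s m 1)
    rw [mul_one]
end

section
/- In VP_n (n ≥ 3), with b_{k,l} the cablings of λ_{2,1}, the following identities hold: b_{n-1,1} = λ_{n,n-1}λ_{n,n-2}⋯λ_{n,1}; b_{n-k,k} = b_{n-k,k-1} · λ_{n,n-k}λ_{n,n-k-1}⋯λ_{n,1} for 1 < k < n; and b_{1,n-1} = b_{1,n-2} · λ_{n,1} (where b_{n-k,k-1} ∈ VP_{n-1} is included in VP_n by adding a trivial strand at the end). -/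
section BBAux

variable {s : ∀ m : ℕ, ℕ → (VP m →* VP (m + 1))} {ι : ∀ m : ℕ, VP m →* VP (m + 1)}

/-- The descending row product `λ_{r,k} λ_{r,k-1} ⋯ λ_{r,1}` in `VP n`. -/
def rowP (n r k : ℕ) : VP n := ((List.range k).map fun j => lam' r (k - j)).prod

/-- Closed form of `bb s n k`. -/
def BBc (n k : ℕ) : VP (n + 2) :=
  ((List.range (n + 2 - k)).map fun t => rowP (n + 2) (k + 1 + t) k).prod

lemma BBc_def (n k : ℕ) :
    BBc n k = ((List.range (n + 2 - k)).map fun t => rowP (n + 2) (k + 1 + t) k).prod := rfl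

lemma desc_succ {M : Type*} [Monoid M] (g : ℕ → M) (k : ℕ) :
    ((List.range (k + 1)).map fun j => g (k + 1 - j)).prod
      = g (k + 1) * ((List.range k).map fun j => g (k - j)).prod := by
  rw [List.range_succ_eq_map, List.map_cons, List.prod_cons, List.map_map]
  simp [Function.comp_def, Nat.succ_sub_succ]

lemma rowP_succ (n r k : ℕ) : rowP n r (k + 1) = lam' r (k + 1) * rowP n r k :=
  desc_succ _ k

lemma asc_eq (n r : ℕ) :
    ∀ t, ((List.range t).map fun j => ((lam' r (j + 1) : VP n))⁻¹).prod = (rowP n r t)⁻¹ := by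
  intro t
  induction t with
  | zero => simp [rowP]
  | succ t ih =>
    rw [List.range_succ, List.map_append, List.prod_append, ih, rowP_succ, mul_inv_rev]
    simp

lemma conjB_eq (n r t : ℕ) : (conjB (t + 1) r : VP n) = (rowP n r t)⁻¹ := by
  simpa [conjB] using asc_eq n r t

lemma s_low (hs : IsCabling s) {m i r j : ℕ} (h1 : 1 ≤ j) (h2 : j < r) (h3 : r ≤ i)
    (h4 : i < m) : s m i (lam' r j) = lam' r j := by
  have h := (hs m j r i h1 h2 (by omega) h4).2
  rw [h, if_neg (by omega), if_neg (by omega), if_neg (by omega), if_neg (by omega)]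

lemma s_mid (hs : IsCabling s) {m i r j : ℕ} (h1 : 1 ≤ j) (h2 : j ≤ i) (h3 : i + 1 < r)
    (h4 : r ≤ m) (h5 : i < m) : s m i (lam' r j) = lam' (r + 1) j := by
  have h := (hs m j r i h1 (by omega) h4 h5).2
  rw [h, if_neg (by omega), if_neg (by omega), if_pos h3]

lemma s_diag (hs : IsCabling s) {m i r : ℕ} (h3 : i + 1 < r) (h4 : r ≤ m) (h5 : i < m) :
    s m i (lam' r (i + 1)) = lam' (r + 1) (i + 2) * lam' (r + 1) (i + 1) := by
  have h := (hs m (i + 1) r i (by omega) h3 h4 h5).2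
  rw [h, if_neg (by omega), if_pos rfl]

lemma s_topgen (hs : IsCabling s) {m j : ℕ} (h1 : 1 ≤ j) (h2 : j < m) :
    s m (m - 1) (lam' m j)
      = lam' m j * (rowP (m + 1) m (j - 1) * lam' (m + 1) j * (rowP (m + 1) m (j - 1))⁻¹) := by
  have h := (hs m j m (m - 1) h1 h2 le_rfl (by omega)).2
  rw [h, if_neg (by omega), if_neg (by omega), if_neg (by omega), if_pos (by omega)]
  obtain ⟨j', rfl⟩ : ∃ j', j = j' + 1 := ⟨j - 1, by omega⟩
  rw [conjB_eq, inv_inv]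
  simp [mul_assoc]

lemma map_rowP {n : ℕ} {G : Type*} [Group G] (f : VP n →* G) (r k : ℕ) :
    f (rowP n r k) = ((List.range k).map fun j => f (lam' r (k - j))).prod := by
  rw [rowP, map_list_prod, List.map_map]; rfl

lemma s_rowP_low (hs : IsCabling s) {m i r k : ℕ} (hkr : k < r) (hri : r ≤ i) (him : i < m) :
    s m i (rowP m r k) = rowP (m + 1) r k := by
  rw [map_rowP, rowP]
  refine congrArg List.prod (List.map_congr_left fun j hj => ?_)
  rw [List.mem_range] at hj
  exact s_low hs (by omega) (by omega) hri him

lemma s_rowP_mid (hs : IsCabling s) {m i r k : ℕ} (hki : k ≤ i) (hir : i + 1 < r)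
    (hrm : r ≤ m) (him : i < m) : s m i (rowP m r k) = rowP (m + 1) (r + 1) k := by
  rw [map_rowP, rowP]
  refine congrArg List.prod (List.map_congr_left fun j hj => ?_)
  rw [List.mem_range] at hj
  exact s_mid hs (by omega) (by omega) hir hrm him

lemma s_rowP_top (hs : IsCabling s) {m : ℕ} :
    ∀ k, k < m → s m (m - 1) (rowP m m k) = rowP (m + 1) m k * rowP (m + 1) (m + 1) k := by
  intro k
  induction k with
  | zero => intro _; simp [rowP]
  | succ k ih =>
    intro hk
    rw [rowP_succ, map_mul, ih (by omega), s_topgen hs (by omega) hk,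
        Nat.add_sub_cancel, rowP_succ, rowP_succ]
    group

lemma s_rowP_pen (hs : IsCabling s) (p : ℕ) :
    s (p + 2) p (rowP (p + 2) (p + 2) (p + 1)) = rowP (p + 3) (p + 3) (p + 2) := by
  rw [rowP_succ, map_mul, s_rowP_mid hs (le_refl p) (by omega) (by omega) (by omega),
      s_diag hs (by omega) (by omega) (by omega)]
  have e1 : rowP (p + 3) (p + 3) (p + 2)
      = lam' (p + 3) (p + 2) * rowP (p + 3) (p + 3) (p + 1) := rowP_succ (p + 3) (p + 3) (p + 1)
  have e2 : rowP (p + 3) (p + 3) (p + 1)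
      = lam' (p + 3) (p + 1) * rowP (p + 3) (p + 3) p := rowP_succ (p + 3) (p + 3) p
  rw [e1, e2, mul_assoc]

lemma chain_high (s : ∀ m : ℕ, ℕ → (VP m →* VP (m + 1))) :
    ∀ m a b, m ≤ a → m ≤ b → chain s a m = chain s b m := by
  intro m
  induction m with
  | zero => intros; rfl
  | succ m ih =>
    intro a b ha hb
    show (s (m + 2) (if a ≤ m then m + 1 else m)).comp (chain s a m)
        = (s (m + 2) (if b ≤ m then m + 1 else m)).comp (chain s b m)
    rw [if_neg (by omega), if_neg (by omega), ih a b (by omega) (by omega)]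

lemma master (hs : IsCabling s) : ∀ n k, 1 ≤ k → k ≤ n + 1 → bb s n k = BBc n k := by
  intro n
  induction n with
  | zero =>
    intro k h1 h2
    have hk : k = 1 := by omega
    subst hk
    show (lam' 2 1 : VP 2) = BBc 0 1
    simp [BBc, rowP, show List.range 1 = [0] from rfl]
  | succ n ih =>
    intro k h1 h2
    show (s (n + 2) (if k - 1 ≤ n then n + 1 else n)) (chain s (k - 1) n (lam' 2 1)) = _
    by_cases hk : k ≤ n + 1
    · rw [if_pos (by omega)]
      have hbb : chain s (k - 1) n (lam' 2 1) = BBc n k := ih k h1 hk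
      rw [hbb]
      have hsplit : BBc n k
          = ((List.range (n + 1 - k)).map fun t => rowP (n + 2) (k + 1 + t) k).prod
            * rowP (n + 2) (n + 2) k := by
        rw [BBc_def, show n + 2 - k = (n + 1 - k) + 1 from by omega, List.range_succ,
            List.map_append, List.prod_append]
        simp only [List.map_cons, List.map_nil, List.prod_cons, List.prod_nil, mul_one]
        rw [show k + 1 + (n + 1 - k) = n + 2 from by omega]
      rw [hsplit, map_mul]
      have h2' : s (n + 2) (n + 1)
          (((List.range (n + 1 - k)).map fun t => rowP (n + 2) (k + 1 + t) k).prod)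
          = ((List.range (n + 1 - k)).map fun t => rowP (n + 3) (k + 1 + t) k).prod := by
        rw [map_list_prod, List.map_map]
        refine congrArg List.prod (List.map_congr_left fun t ht => ?_)
        rw [List.mem_range] at ht
        exact s_rowP_low hs (by omega) (by omega) (by omega)
      have h3' : s (n + 2) (n + 1) (rowP (n + 2) (n + 2) k)
          = rowP (n + 3) (n + 2) k * rowP (n + 3) (n + 3) k :=
        s_rowP_top hs k (by omega)
      rw [h2', h3']
      show _ = ((List.range (n + 3 - k)).map fun t => rowP (n + 3) (k + 1 + t) k).prod
      rw [show n + 3 - k = ((n + 1 - k) + 1) + 1 from by omega, List.range_succ,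
          List.range_succ, List.map_append, List.map_append, List.prod_append,
          List.prod_append]
      simp only [List.map_cons, List.map_nil, List.prod_cons, List.prod_nil, mul_one]
      rw [show k + 1 + (n + 1 - k) = n + 2 from by omega,
          show k + 1 + ((n + 1 - k) + 1) = n + 3 from by omega, mul_assoc]
    · rw [if_neg (by omega)]
      have hk2 : k = n + 2 := by omega
      subst hk2
      rw [chain_high s n (n + 2 - 1) (n + 1 - 1) (by omega) (by omega)]
      have hbb := ih (n + 1) (by omega) le_rfl
      unfold bb at hbb
      rw [hbb]
      have hsingle : BBc n (n + 1) = rowP (n + 2) (n + 2) (n + 1) := by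
        rw [BBc_def, show n + 2 - (n + 1) = 1 from by omega,
          show List.range 1 = [0] from rfl]
        simp only [List.map_cons, List.map_nil, List.prod_cons,
          List.prod_nil, mul_one]
      rw [hsingle, s_rowP_pen hs n]
      rw [BBc_def, show (n + 1) + 2 - (n + 2) = 1 from by omega,
        show List.range 1 = [0] from rfl]
      simp only [List.map_cons, List.map_nil, List.prod_cons,
        List.prod_nil, mul_one]

lemma iota_BBc (hι : IsIncl ι) (m r : ℕ) (h1 : 1 ≤ r) (h2 : r ≤ m + 1) :
    ι (m + 2) (BBc m r)
      = ((List.range (m + 2 - r)).map fun t => rowP (m + 3) (r + 1 + t) r).prod := by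
  rw [BBc_def, map_list_prod, List.map_map]
  refine congrArg List.prod (List.map_congr_left fun t ht => ?_)
  rw [List.mem_range] at ht
  show ι (m + 2) (rowP (m + 2) (r + 1 + t) r) = _
  rw [map_rowP, rowP]
  refine congrArg List.prod (List.map_congr_left fun j hj => ?_)
  rw [List.mem_range] at hj
  refine hι (m + 2) _ _ ?_
  refine ⟨by omega, by omega, by omega, by omega, by omega⟩

lemma step2 (hs : IsCabling s) (hι : IsIncl ι) (m r : ℕ) (h1 : 1 ≤ r) (h2 : r ≤ m + 1) :
    bb s (m + 1) r = ι (m + 2) (bb s m r) * rowP (m + 3) (m + 3) r := by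
  rw [master hs (m + 1) r h1 (by omega), master hs m r h1 h2, iota_BBc hι m r h1 h2]
  show ((List.range (m + 3 - r)).map fun t => rowP (m + 3) (r + 1 + t) r).prod = _
  rw [show m + 3 - r = (m + 2 - r) + 1 from by omega, List.range_succ, List.map_append,
      List.prod_append]
  simp only [List.map_cons, List.map_nil, List.prod_cons, List.prod_nil, mul_one]
  congr 2
  omega

end BBAux

/-- (Formula (3.2).) In `VP n` with `n = m + 3 ≥ 3`, writing
`b_{k,l}` for the cablings of `λ_{2,1}` (so `b_{k, n-k} = bb s (m+1) k ∈ VP n` and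
`b_{k, n-1-k} = bb s m k ∈ VP (n-1)`, included in `VP n` via `ι`):
`b_{n-1,1} = λ_{n,n-1}λ_{n,n-2}⋯λ_{n,1}`;
`b_{n-k,k} = b_{n-k,k-1} · λ_{n,n-k}λ_{n,n-k-1}⋯λ_{n,1}` for `1 < k < n`; and
`b_{1,n-1} = b_{1,n-2} · λ_{n,1}`. -/
theorem bb_recursion (s : ∀ m : ℕ, ℕ → (VP m →* VP (m + 1)))
    (ι : ∀ m : ℕ, VP m →* VP (m + 1)) (hs : IsCabling s) (hι : IsIncl ι) (m : ℕ) :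
    (bb s (m + 1) (m + 2) =
      ((List.range (m + 2)).map fun j => (lam' (m + 3) (m + 2 - j) : VP (m + 3))).prod) ∧
    (∀ k : ℕ, 1 < k → k < m + 3 →
      bb s (m + 1) (m + 3 - k) =
        ι (m + 2) (bb s m (m + 3 - k)) *
          ((List.range (m + 3 - k)).map fun j =>
            (lam' (m + 3) (m + 3 - k - j) : VP (m + 3))).prod) ∧
    (bb s (m + 1) 1 = ι (m + 2) (bb s m 1) * (lam' (m + 3) 1 : VP (m + 3))) := by

  refine ⟨?_, ?_, ?_⟩
  · rw [master hs (m + 1) (m + 2) (by omega) (by omega)]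
    show ((List.range ((m + 1) + 2 - (m + 2))).map
        fun t => rowP (m + 3) (m + 2 + 1 + t) (m + 2)).prod = _
    rw [show (m + 1) + 2 - (m + 2) = 1 from by omega,
      show List.range 1 = [0] from rfl]
    simp only [List.map_cons, List.map_nil, List.prod_cons,
      List.prod_nil, mul_one]
    show rowP (m + 3) (m + 2 + 1 + 0) (m + 2) = _
    rw [show m + 2 + 1 + 0 = m + 3 from by omega]
    rfl
  · intro k hk1 hk2
    exact step2 hs hι m (m + 3 - k) (by omega) (by omega)
  · have h := step2 hs hι m 1 (by omega) (by omega)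
    rw [h]
    congr 1
    simp [rowP, show List.range 1 = [0] from rfl]
end

section
/- In VP_n (n ≥ 3), each generator λ_{kn} (1 ≤ k ≤ n−1) can be expressed in terms of the cabled elements a_{i,j}: λ_{1n} = a_{1,n-1} a_{1,n-2}^{-1}; λ_{kn} = a_{k-1,n-k} a_{k-1,n-k+1}^{-1} a_{k,n-k} a_{k,n-k-1}^{-1} for 1 < k < n−1; and λ_{n-1,n} = a_{n-2,1} a_{n-2,2}^{-1} a_{n-1,1}. -/
section Helpers

lemma VPIdx.mono {n n' : ℕ} {p : ℕ × ℕ} (h : VPIdx n p) (hn : n ≤ n') : VPIdx n' p :=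
  ⟨h.1, h.2.1.trans hn, h.2.2.1, h.2.2.2.1.trans hn, h.2.2.2.2⟩

lemma VP.hom_ext {n : ℕ} {G : Type*} [Group G] {f g : VP n →* G}
    (h : ∀ i j, VPIdx n (i, j) → f (lam' i j) = g (lam' i j)) : f = g := by
  apply PresentedGroup.ext
  rintro ⟨⟨i, j⟩, hij⟩
  have hx := h i j hij
  unfold lam' at hx
  rwa [dif_pos hij] at hx

lemma conjA_one {n : ℕ} (l : ℕ) : (conjA 1 l : VP n) = 1 := by simp [conjA]

lemma conjA_two {n : ℕ} (l : ℕ) : (conjA 2 l : VP n) = lam' 1 l := by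
  simp [conjA, List.range_succ]

lemma conjA_succ {n : ℕ} (k l : ℕ) :
    (conjA (k + 2) l : VP n) = conjA (k + 1) l * lam' (k + 1) l := by
  simp [conjA, List.range_succ]

lemma iota_conjA {ι : ∀ m : ℕ, VP m →* VP (m + 1)} (hι : IsIncl ι)
    (M t l : ℕ) (htl : t < l) (hl : l ≤ M) :
    ι M (conjA (t + 1) l) = conjA (t + 1) l := by
  induction t with
  | zero => simp [conjA_one]
  | succ t ih =>
    have h2 : (conjA (t + 2) l : VP M) = conjA (t + 1) l * lam' (t + 1) l :=
      conjA_succ t l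
    rw [show t + 1 + 1 = t + 2 from rfl, h2, map_mul, ih (by omega),
      hι M (t + 1) l ⟨by omega, by omega, by omega, by omega, by omega⟩,
      conjA_succ]

lemma s_fix {s : ∀ m : ℕ, ℕ → (VP m →* VP (m + 1))} (hs : IsCabling s)
    (M i j : ℕ) (h : VPIdx M (i, j)) :
    s (M + 1) M (lam' i j) = lam' i j := by
  obtain ⟨h1, h2, h3, h4, h5⟩ := h
  rcases lt_or_gt_of_ne h5 with hlt | hgt
  · have hc := (hs (M + 1) i j M h1 hlt (by omega) (by omega)).1
    rwa [if_neg (by omega), if_neg (by omega), if_neg (by omega), if_neg (by omega)] at hc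
  · have hc := (hs (M + 1) j i M h3 hgt (by omega) (by omega)).2
    rwa [if_neg (by omega), if_neg (by omega), if_neg (by omega), if_neg (by omega)] at hc

lemma s_iota {s : ∀ m : ℕ, ℕ → (VP m →* VP (m + 1))} {ι : ∀ m : ℕ, VP m →* VP (m + 1)}
    (hs : IsCabling s) (hι : IsIncl ι) (m : ℕ) (x : VP (m + 2)) :
    s (m + 3) (m + 2) (ι (m + 2) x) = ι (m + 3) (ι (m + 2) x) := by
  have hcomp : (s (m + 3) (m + 2)).comp (ι (m + 2)) = (ι (m + 3)).comp (ι (m + 2)) := by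
    apply VP.hom_ext
    intro i j h
    simp only [MonoidHom.comp_apply]
    rw [hι (m + 2) i j h, s_fix hs (m + 2) i j h, hι (m + 3) i j (h.mono (by omega))]
  exact DFunLike.congr_fun hcomp x

lemma tel {s : ∀ m : ℕ, ℕ → (VP m →* VP (m + 1))} (hs : IsCabling s) (m : ℕ) :
    ∀ t, t ≤ m + 2 →
      s (m + 3) (m + 2) (conjA (t + 1) (m + 3)) =
        conjA (t + 1) (m + 4) * conjA (t + 1) (m + 3) := by
  intro t
  induction t with
  | zero => intro _; simp [conjA_one]
  | succ t ih =>
    intro ht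
    have hlam := (hs (m + 3) (t + 1) (m + 3) (m + 2) (by omega) (by omega) le_rfl (by omega)).1
    rw [if_neg (by omega), if_neg (by omega), if_neg (by omega), if_pos rfl] at hlam
    rw [show t + 1 + 1 = t + 2 from rfl, conjA_succ, map_mul, ih (by omega), hlam,
      conjA_succ, conjA_succ]
    group

lemma sh {s : ∀ m : ℕ, ℕ → (VP m →* VP (m + 1))} (hs : IsCabling s) (m : ℕ) :
    ∀ t, t ≤ m + 1 →
      s (m + 3) (m + 1) (conjA (t + 1) (m + 3)) = conjA (t + 1) (m + 4) := by
  intro t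
  induction t with
  | zero => intro _; simp [conjA_one]
  | succ t ih =>
    intro ht
    have hlam := (hs (m + 3) (t + 1) (m + 3) (m + 1) (by omega) (by omega) le_rfl (by omega)).1
    rw [if_neg (by omega), if_neg (by omega), if_pos (by omega)] at hlam
    rw [show t + 1 + 1 = t + 2 from rfl, conjA_succ, map_mul, ih (by omega), hlam, conjA_succ]

lemma chain_stable (s : ∀ m : ℕ, ℕ → (VP m →* VP (m + 1))) :
    ∀ m s1 s2, m ≤ s1 → m ≤ s2 → chain s s1 m = chain s s2 m := by
  intro m
  induction m with
  | zero => intros; rfl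
  | succ m ih =>
    intro s1 s2 h1 h2
    show (s (m + 2) (if s1 ≤ m then m + 1 else m)).comp (chain s s1 m) =
      (s (m + 2) (if s2 ≤ m then m + 1 else m)).comp (chain s s2 m)
    rw [if_neg (by omega), if_neg (by omega), ih s1 s2 (by omega) (by omega)]

end Helpers
lemma key_aa {s : ∀ m : ℕ, ℕ → (VP m →* VP (m + 1))} {ι : ∀ m : ℕ, VP m →* VP (m + 1)}
    (hs : IsCabling s) (hι : IsIncl ι) : ∀ m : ℕ,
    (∀ k, 1 ≤ k → k ≤ m + 1 →
      aa s (m + 1) k = conjA (k + 1) (m + 3) * ι (m + 2) (aa s m k)) ∧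
    aa s (m + 1) (m + 2) = conjA (m + 3) (m + 3) := by
  intro m
  induction m with
  | zero =>
    constructor
    · intro k hk1 hk2
      interval_cases k
      show aa s 1 1 = conjA 2 3 * ι 2 (aa s 0 1)
      have h1 := (hs 2 1 2 1 le_rfl one_lt_two le_rfl one_lt_two).1
      rw [if_neg (by omega), if_neg (by omega), if_neg (by omega), if_pos rfl] at h1
      have e1 : aa s 1 1 = s 2 1 (lam' 1 2) := rfl
      have e0 : aa s 0 1 = lam' 1 2 := rfl
      have h1' : s 2 1 (lam' 1 2) = (conjA 1 2)⁻¹ * lam' 1 3 * conjA 1 2 * lam' 1 2 := h1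
      rw [e1, e0, h1', conjA_one, conjA_two, hι 2 1 2 (by decide)]
      group
    · show aa s 1 2 = conjA 3 3
      have h2 := (hs 2 1 2 0 le_rfl one_lt_two le_rfl (by omega)).1
      rw [if_neg (by omega), if_pos rfl] at h2
      have h2' : s 2 0 (lam' 1 2) = lam' 1 3 * lam' 2 3 := h2
      have e2 : aa s 1 2 = s 2 0 (lam' 1 2) := rfl
      have e3 : (conjA 3 3 : VP 3) = conjA 2 3 * lam' 2 3 := conjA_succ 1 3
      rw [e2, h2', e3, conjA_two]
  | succ m ih =>
    obtain ⟨ihQ, ihP⟩ := ih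
    have hstep : ∀ k, k ≤ m + 2 → aa s (m + 2) k = s (m + 3) (m + 2) (aa s (m + 1) k) := by
      intro k hk
      have e : aa s (m + 2) k =
          (s (m + 3) (if k - 1 ≤ m + 1 then m + 2 else m + 1)) (aa s (m + 1) k) := rfl
      rw [e, if_pos (by omega)]
    constructor
    · intro k hk1 hk2
      show aa s (m + 2) k = conjA (k + 1) (m + 4) * ι (m + 3) (aa s (m + 1) k)
      rcases Nat.lt_or_ge k (m + 2) with hk | hk
      · rw [hstep k (by omega), ihQ k hk1 (by omega), map_mul, tel hs m k (by omega),
          s_iota hs hι m (aa s m k), map_mul,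
          iota_conjA hι (m + 3) k (m + 3) (by omega) (by omega), mul_assoc]
      · have hkk : k = m + 2 := by omega
        subst hkk
        show aa s (m + 2) (m + 2) = conjA (m + 3) (m + 4) * ι (m + 3) (aa s (m + 1) (m + 2))
        have htel : s (m + 3) (m + 2) (conjA (m + 3) (m + 3)) =
            conjA (m + 3) (m + 4) * conjA (m + 3) (m + 3) := tel hs m (m + 2) le_rfl
        have hico : ι (m + 3) (conjA (m + 3) (m + 3) : VP (m + 3)) = conjA (m + 3) (m + 3) :=
          iota_conjA hι (m + 3) (m + 2) (m + 3) (by omega) (by omega)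
        rw [hstep (m + 2) le_rfl, ihP, htel, hico]
    · show aa s (m + 2) (m + 3) = conjA (m + 4) (m + 4)
      have e : aa s (m + 2) (m + 3) =
          (s (m + 3) (if (m + 3) - 1 ≤ m + 1 then m + 2 else m + 1))
            (chain s ((m + 3) - 1) (m + 1) (lam' 1 2)) := rfl
      rw [e, if_neg (by omega)]
      have hcs : chain s ((m + 3) - 1) (m + 1) = chain s ((m + 2) - 1) (m + 1) :=
        chain_stable s (m + 1) _ _ (by omega) (by omega)
      have e2 : chain s ((m + 2) - 1) (m + 1) (lam' 1 2) = aa s (m + 1) (m + 2) := rfl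
      rw [hcs, e2, ihP]
      have hc : (conjA (m + 3) (m + 3) : VP (m + 3)) =
          conjA (m + 2) (m + 3) * lam' (m + 2) (m + 3) := conjA_succ (m + 1) (m + 3)
      have hsh : s (m + 3) (m + 1) (conjA (m + 2) (m + 3)) = conjA (m + 2) (m + 4) :=
        sh hs m (m + 1) le_rfl
      have hlam0 := (hs (m + 3) (m + 2) (m + 3) (m + 1) (by omega) (by omega) le_rfl (by omega)).1
      rw [if_neg (by omega), if_pos (by omega)] at hlam0
      have hlam : s (m + 3) (m + 1) (lam' (m + 2) (m + 3)) =
          lam' (m + 2) (m + 4) * lam' (m + 3) (m + 4) := hlam0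
      have h1 : (conjA (m + 4) (m + 4) : VP (m + 4)) =
          conjA (m + 3) (m + 4) * lam' (m + 3) (m + 4) := conjA_succ (m + 2) (m + 4)
      have h2 : (conjA (m + 3) (m + 4) : VP (m + 4)) =
          conjA (m + 2) (m + 4) * lam' (m + 2) (m + 4) := conjA_succ (m + 1) (m + 4)
      rw [hc, map_mul, hsh, hlam, h1, h2]
      group
/-- (Formula (3.3).) In `VP n` with `n = m + 3 ≥ 3`, each generator
`λ_{k n}` is expressed in terms of the cabled elements `a_{i,j}`
(`a_{i, n-i} = aa s (m+1) i`, and `a_{i, n-1-i} = aa s m i ∈ VP (n-1)` included via `ι`):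
`λ_{1n} = a_{1,n-1} a_{1,n-2}⁻¹`;
`λ_{kn} = a_{k-1,n-k} a_{k-1,n-k+1}⁻¹ a_{k,n-k} a_{k,n-k-1}⁻¹` for `1 < k < n-1`;
`λ_{n-1,n} = a_{n-2,1} a_{n-2,2}⁻¹ a_{n-1,1}`. -/
theorem lam_in_terms_of_aa (s : ∀ m : ℕ, ℕ → (VP m →* VP (m + 1)))
    (ι : ∀ m : ℕ, VP m →* VP (m + 1)) (hs : IsCabling s) (hι : IsIncl ι) (m : ℕ) :
    ((lam' 1 (m + 3) : VP (m + 3)) = aa s (m + 1) 1 * (ι (m + 2) (aa s m 1))⁻¹) ∧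
    (∀ k : ℕ, 1 < k → k < m + 2 →
      (lam' k (m + 3) : VP (m + 3)) =
        ι (m + 2) (aa s m (k - 1)) * (aa s (m + 1) (k - 1))⁻¹ *
          aa s (m + 1) k * (ι (m + 2) (aa s m k))⁻¹) ∧
    ((lam' (m + 2) (m + 3) : VP (m + 3)) =
      ι (m + 2) (aa s m (m + 1)) * (aa s (m + 1) (m + 1))⁻¹ * aa s (m + 1) (m + 2)) := by
  obtain ⟨hQ, hP⟩ := key_aa hs hι m
  refine ⟨?_, ?_, ?_⟩
  · have h1 : aa s (m + 1) 1 = conjA 2 (m + 3) * ι (m + 2) (aa s m 1) :=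
      hQ 1 le_rfl (by omega)
    rw [h1, conjA_two]
    group
  · intro k hk1 hk2
    obtain ⟨j, rfl⟩ : ∃ j, k = j + 2 := ⟨k - 2, by omega⟩
    have ha : aa s (m + 1) (j + 2 - 1) =
        conjA (j + 2) (m + 3) * ι (m + 2) (aa s m (j + 2 - 1)) :=
      hQ (j + 1) (by omega) (by omega)
    have hb : aa s (m + 1) (j + 2) =
        conjA (j + 3) (m + 3) * ι (m + 2) (aa s m (j + 2)) :=
      hQ (j + 2) (by omega) (by omega)
    have hcs : (conjA (j + 3) (m + 3) : VP (m + 3)) =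
        conjA (j + 2) (m + 3) * lam' (j + 2) (m + 3) := conjA_succ (j + 1) (m + 3)
    rw [ha, hb, hcs]
    group
  · have ha : aa s (m + 1) (m + 1) =
        conjA (m + 2) (m + 3) * ι (m + 2) (aa s m (m + 1)) :=
      hQ (m + 1) (by omega) le_rfl
    have hcs : (conjA (m + 3) (m + 3) : VP (m + 3)) =
        conjA (m + 2) (m + 3) * lam' (m + 2) (m + 3) := conjA_succ (m + 1) (m + 3)
    rw [ha, hP, hcs]
    group
end

section
/- For n ≥ 3, the subgroup T_{n-1} of VP_n generated by the cabled elements a_{k,l}, b_{k,l} with k + l = n equals the subgroup generated by s_0(T_{n-2}) ∪ s_1(T_{n-2}) ∪ ⋯ ∪ s_{n-2}(T_{n-2}), where T_1 = VP_2 and s_i are the strand-doubling homomorphisms. -/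
/-! ### Auxiliary development: explicit normal forms for the cabled elements -/

namespace CabledAux

/-- `rowA m k c = λ_{1,c} λ_{2,c} ⋯ λ_{k,c}` in `VP m`. -/
def rowA (m : ℕ) : ℕ → ℕ → VP m
  | 0, _ => 1
  | k + 1, c => rowA m k c * lam' (k + 1) c

/-- `rowB m k c = λ_{c,k} λ_{c,k-1} ⋯ λ_{c,1}` in `VP m`. -/
def rowB (m : ℕ) : ℕ → ℕ → VP m
  | 0, _ => 1
  | k + 1, c => lam' c (k + 1) * rowB m k c

/-- `AW m k l = a_{k,l}`: columns `k+l, k+l-1, …, k+1`, each a `rowA`. -/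
def AW (m k : ℕ) : ℕ → VP m
  | 0 => 1
  | l + 1 => rowA m k (k + l + 1) * AW m k l

/-- `BW m k l = b_{k,l}`: columns `k+1, k+2, …, k+l`, each a `rowB`. -/
def BW (m k : ℕ) : ℕ → VP m
  | 0 => 1
  | l + 1 => BW m k l * rowB m k (k + l + 1)

lemma conjA_eq (m k l : ℕ) : (conjA k l : VP m) = rowA m (k - 1) l := by
  suffices h : ∀ j, ((List.range j).map fun j => (lam' (j + 1) l : VP m)).prod = rowA m j l from
    h (k - 1)
  intro j
  induction j with
  | zero => simp [rowA]
  | succ j ih =>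
      rw [List.range_succ, List.map_append, List.prod_append, ih]
      simp [rowA]

lemma conjB_eq (m k l : ℕ) : (conjB k l : VP m) = (rowB m (k - 1) l)⁻¹ := by
  suffices h : ∀ j, ((List.range j).map fun j => ((lam' l (j + 1) : VP m))⁻¹).prod
      = (rowB m j l)⁻¹ from h (k - 1)
  intro j
  induction j with
  | zero => simp [rowB]
  | succ j ih =>
      rw [List.range_succ, List.map_append, List.prod_append, ih]
      simp [rowB, mul_assoc]

section Gen

variable {s : ∀ m : ℕ, ℕ → (VP m →* VP (m + 1))} (hs : IsCabling s)
variable {m k l i : ℕ}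

include hs

lemma sA_lt (hk : 1 ≤ k) (hkl : k < l) (hlm : l ≤ m) (him : i < m) (h : i + 1 < k) :
    s m i (lam' k l) = lam' (k + 1) (l + 1) := by
  rw [(hs m k l i hk hkl hlm him).1, if_pos h]

lemma sA_k (hk : 1 ≤ k) (hkl : k < l) (hlm : l ≤ m) (him : i < m) (h : i + 1 = k) :
    s m i (lam' k l) = lam' k (l + 1) * lam' (k + 1) (l + 1) := by
  rw [(hs m k l i hk hkl hlm him).1, if_neg (by omega), if_pos h]

lemma sA_mid (hk : 1 ≤ k) (hkl : k < l) (hlm : l ≤ m) (him : i < m)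
    (h1 : k < i + 1) (h2 : i + 1 < l) : s m i (lam' k l) = lam' k (l + 1) := by
  rw [(hs m k l i hk hkl hlm him).1, if_neg (by omega), if_neg (by omega), if_pos h2]

lemma sA_l (hk : 1 ≤ k) (hkl : k < l) (hlm : l ≤ m) (him : i < m) (h : i + 1 = l) :
    s m i (lam' k l)
      = (rowA (m + 1) (k - 1) l)⁻¹ * lam' k (l + 1) * rowA (m + 1) (k - 1) l * lam' k l := by
  rw [(hs m k l i hk hkl hlm him).1, if_neg (by omega), if_neg (by omega), if_neg (by omega),
    if_pos h, conjA_eq]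

lemma sA_gt (hk : 1 ≤ k) (hkl : k < l) (hlm : l ≤ m) (him : i < m) (h : l < i + 1) :
    s m i (lam' k l) = lam' k l := by
  rw [(hs m k l i hk hkl hlm him).1, if_neg (by omega), if_neg (by omega), if_neg (by omega),
    if_neg (by omega)]

lemma sB_lt (hk : 1 ≤ k) (hkl : k < l) (hlm : l ≤ m) (him : i < m) (h : i + 1 < k) :
    s m i (lam' l k) = lam' (l + 1) (k + 1) := by
  rw [(hs m k l i hk hkl hlm him).2, if_pos h]

lemma sB_k (hk : 1 ≤ k) (hkl : k < l) (hlm : l ≤ m) (him : i < m) (h : i + 1 = k) :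
    s m i (lam' l k) = lam' (l + 1) (k + 1) * lam' (l + 1) k := by
  rw [(hs m k l i hk hkl hlm him).2, if_neg (by omega), if_pos h]

lemma sB_mid (hk : 1 ≤ k) (hkl : k < l) (hlm : l ≤ m) (him : i < m)
    (h1 : k < i + 1) (h2 : i + 1 < l) : s m i (lam' l k) = lam' (l + 1) k := by
  rw [(hs m k l i hk hkl hlm him).2, if_neg (by omega), if_neg (by omega), if_pos h2]

lemma sB_l (hk : 1 ≤ k) (hkl : k < l) (hlm : l ≤ m) (him : i < m) (h : i + 1 = l) :
    s m i (lam' l k)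
      = lam' l k * (rowB (m + 1) (k - 1) l * lam' (l + 1) k * (rowB (m + 1) (k - 1) l)⁻¹) := by
  rw [(hs m k l i hk hkl hlm him).2, if_neg (by omega), if_neg (by omega), if_neg (by omega),
    if_pos h, conjB_eq, inv_inv]

lemma sB_gt (hk : 1 ≤ k) (hkl : k < l) (hlm : l ≤ m) (him : i < m) (h : l < i + 1) :
    s m i (lam' l k) = lam' l k := by
  rw [(hs m k l i hk hkl hlm him).2, if_neg (by omega), if_neg (by omega), if_neg (by omega),
    if_neg (by omega)]

/-! ### Action of the degeneracies on rows -/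

lemma s_rowA {m i c : ℕ} (him : i < m) (hic : i + 1 < c) (hcm : c ≤ m) :
    ∀ k, k < c →
      s m i (rowA m k c) = rowA (m + 1) (if i + 1 ≤ k then k + 1 else k) (c + 1) := by
  intro k
  induction k with
  | zero => intro _; rw [if_neg (by omega)]; simp [rowA]
  | succ k ih =>
      intro hk
      rw [rowA, map_mul, ih (by omega)]
      rcases lt_trichotomy (i + 1) (k + 1) with h | h | h
      · rw [sA_lt hs (by omega) hk hcm him h, if_pos (by omega), if_pos (by omega)]
        simp [rowA, mul_assoc]
      · rw [sA_k hs (by omega) hk hcm him h, if_neg (by omega), if_pos (by omega)]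
        simp [rowA, mul_assoc]
      · rw [sA_mid hs (by omega) hk hcm him h hic, if_neg (by omega), if_neg (by omega), rowA]

lemma s_rowA_gt {m i c : ℕ} (him : i < m) (hic : c < i + 1) (hcm : c ≤ m) :
    ∀ k, k < c → s m i (rowA m k c) = rowA (m + 1) k c := by
  intro k
  induction k with
  | zero => intro _; simp [rowA]
  | succ k ih =>
      intro hk
      rw [rowA, map_mul, ih (by omega), sA_gt hs (by omega) hk hcm him hic, rowA]

lemma s_rowA_eq {m i c : ℕ} (him : i < m) (hic : i + 1 = c) :
    ∀ k, k < c → s m i (rowA m k c) = rowA (m + 1) k (c + 1) * rowA (m + 1) k c := by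
  intro k
  induction k with
  | zero => intro _; simp [rowA]
  | succ k ih =>
      intro hk
      rw [rowA, map_mul, ih (by omega), sA_l hs (by omega) hk (by omega) him hic]
      have e : k + 1 - 1 = k := rfl
      rw [e]
      simp only [rowA]
      group

lemma s_rowB {m i c : ℕ} (him : i < m) (hic : i + 1 < c) (hcm : c ≤ m) :
    ∀ k, k < c →
      s m i (rowB m k c) = rowB (m + 1) (if i + 1 ≤ k then k + 1 else k) (c + 1) := by
  intro k
  induction k with
  | zero => intro _; rw [if_neg (by omega)]; simp [rowB]
  | succ k ih =>
      intro hk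
      rw [rowB, map_mul, ih (by omega)]
      rcases lt_trichotomy (i + 1) (k + 1) with h | h | h
      · rw [sB_lt hs (by omega) hk hcm him h, if_pos (by omega), if_pos (by omega)]
        simp [rowB, mul_assoc]
      · rw [sB_k hs (by omega) hk hcm him h, if_neg (by omega), if_pos (by omega)]
        simp [rowB, mul_assoc]
      · rw [sB_mid hs (by omega) hk hcm him h hic, if_neg (by omega), if_neg (by omega), rowB]

lemma s_rowB_gt {m i c : ℕ} (him : i < m) (hic : c < i + 1) (hcm : c ≤ m) :
    ∀ k, k < c → s m i (rowB m k c) = rowB (m + 1) k c := by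
  intro k
  induction k with
  | zero => intro _; simp [rowB]
  | succ k ih =>
      intro hk
      rw [rowB, map_mul, ih (by omega), sB_gt hs (by omega) hk hcm him hic, rowB]

lemma s_rowB_eq {m i c : ℕ} (him : i < m) (hic : i + 1 = c) :
    ∀ k, k < c → s m i (rowB m k c) = rowB (m + 1) k c * rowB (m + 1) k (c + 1) := by
  intro k
  induction k with
  | zero => intro _; simp [rowB]
  | succ k ih =>
      intro hk
      rw [rowB, map_mul, ih (by omega), sB_l hs (by omega) hk (by omega) him hic]
      have e : k + 1 - 1 = k := rfl
      rw [e]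
      simp only [rowB]
      group

/-! ### Action of the degeneracies on the cabled words -/

lemma s_AW_gt {m i k : ℕ} (him : i < m) :
    ∀ l, k + l < i + 1 → k + l ≤ m → s m i (AW m k l) = AW (m + 1) k l := by
  intro l
  induction l with
  | zero => intro _ _; simp [AW]
  | succ l ih =>
      intro h1 h2
      rw [AW, map_mul, ih (by omega) (by omega),
        s_rowA_gt hs him (by omega) (by omega) k (by omega), AW]

lemma s_BW_gt {m i k : ℕ} (him : i < m) :
    ∀ l, k + l < i + 1 → k + l ≤ m → s m i (BW m k l) = BW (m + 1) k l := by
  intro l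
  induction l with
  | zero => intro _ _; simp [BW]
  | succ l ih =>
      intro h1 h2
      rw [BW, map_mul, ih (by omega) (by omega),
        s_rowB_gt hs him (by omega) (by omega) k (by omega), BW]

lemma s_AW_low {m i k : ℕ} (him : i < m) (hik : i + 1 ≤ k) :
    ∀ l, k + l ≤ m → s m i (AW m k l) = AW (m + 1) (k + 1) l := by
  intro l
  induction l with
  | zero => intro _; simp [AW]
  | succ l ih =>
      intro h2
      rw [AW, map_mul, ih (by omega), s_rowA hs him (by omega) (by omega) k (by omega),
        if_pos hik]
      have e : k + 1 + l + 1 = k + l + 1 + 1 := by omega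
      rw [AW, e]

lemma s_BW_low {m i k : ℕ} (him : i < m) (hik : i + 1 ≤ k) :
    ∀ l, k + l ≤ m → s m i (BW m k l) = BW (m + 1) (k + 1) l := by
  intro l
  induction l with
  | zero => intro _; simp [BW]
  | succ l ih =>
      intro h2
      rw [BW, map_mul, ih (by omega), s_rowB hs him (by omega) (by omega) k (by omega),
        if_pos hik]
      have e : k + 1 + l + 1 = k + l + 1 + 1 := by omega
      rw [BW, e]

lemma s_AW_mid {m i k : ℕ} (him : i < m) (hki : k ≤ i) :
    ∀ l, i + 1 ≤ k + l → k + l ≤ m → s m i (AW m k l) = AW (m + 1) k (l + 1) := by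
  intro l
  induction l with
  | zero => intro h1 _; omega
  | succ l ih =>
      intro h1 h2
      rcases eq_or_lt_of_le h1 with h | h
      · rw [AW, map_mul, s_rowA_eq hs him (by omega) k (by omega),
          s_AW_gt hs him l (by omega) (by omega)]
        simp only [AW]
        group
      · rw [AW, map_mul, ih (by omega) (by omega),
          s_rowA hs him (by omega) (by omega) k (by omega), if_neg (by omega)]
        rfl

lemma s_BW_mid {m i k : ℕ} (him : i < m) (hki : k ≤ i) :
    ∀ l, i + 1 ≤ k + l → k + l ≤ m → s m i (BW m k l) = BW (m + 1) k (l + 1) := by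
  intro l
  induction l with
  | zero => intro h1 _; omega
  | succ l ih =>
      intro h1 h2
      rcases eq_or_lt_of_le h1 with h | h
      · rw [BW, map_mul, s_rowB_eq hs him (by omega) k (by omega),
          s_BW_gt hs him l (by omega) (by omega)]
        simp only [BW]
        group
      · rw [BW, map_mul, ih (by omega) (by omega),
          s_rowB hs him (by omega) (by omega) k (by omega), if_neg (by omega)]
        rfl

end Gen

/-! ### Identification of the cabled elements -/

lemma chain_ge (s : ∀ m : ℕ, ℕ → (VP m →* VP (m + 1))) :
    ∀ n a b, n ≤ a → n ≤ b → chain s a n = chain s b n := by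
  intro n
  induction n with
  | zero => intro a b _ _; rfl
  | succ n ih =>
      intro a b ha hb
      rw [chain, chain, if_neg (by omega), if_neg (by omega), ih a b (by omega) (by omega)]

lemma aa_eq {s : ∀ m : ℕ, ℕ → (VP m →* VP (m + 1))} (hs : IsCabling s) :
    ∀ n k l, 1 ≤ k → 1 ≤ l → k + l = n + 2 → aa s n k = AW (n + 2) k l := by
  intro n
  induction n with
  | zero =>
      intro k l hk hl hkl
      obtain rfl : k = 1 := by omega
      obtain rfl : l = 1 := by omega
      show lam' 1 2 = AW 2 1 1
      simp [AW, rowA]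
  | succ n ih =>
      intro k l hk hl hkl
      rcases Nat.lt_or_ge k (n + 2) with h | h
      · obtain ⟨l', rfl⟩ : ∃ l', l = l' + 1 := ⟨l - 1, by omega⟩
        have : aa s (n + 1) k = s (n + 2) (n + 1) (aa s n k) := by
          show chain s (k - 1) (n + 1) (lam' 1 2) = _
          rw [chain, if_pos (by omega)]
          rfl
        rw [this, ih k l' (by omega) (by omega) (by omega),
          s_AW_mid hs (by omega) (by omega) l' (by omega) (by omega)]
      · obtain rfl : k = n + 2 := by omega
        obtain rfl : l = 1 := by omega
        have : aa s (n + 1) (n + 2) = s (n + 2) n (aa s n (n + 1)) := by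
          show chain s (n + 2 - 1) (n + 1) (lam' 1 2) = _
          rw [chain, if_neg (by omega)]
          have e : n + 2 - 1 = n + 1 := by omega
          rw [e, chain_ge s n (n + 1) (n + 1 - 1) (by omega) (by omega)]
          rfl
        rw [this, ih (n + 1) 1 (by omega) (by omega) (by omega),
          s_AW_low hs (by omega) (by omega) 1 (by omega)]

lemma bb_eq {s : ∀ m : ℕ, ℕ → (VP m →* VP (m + 1))} (hs : IsCabling s) :
    ∀ n k l, 1 ≤ k → 1 ≤ l → k + l = n + 2 → bb s n k = BW (n + 2) k l := by
  intro n
  induction n with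
  | zero =>
      intro k l hk hl hkl
      obtain rfl : k = 1 := by omega
      obtain rfl : l = 1 := by omega
      show lam' 2 1 = BW 2 1 1
      simp [BW, rowB]
  | succ n ih =>
      intro k l hk hl hkl
      rcases Nat.lt_or_ge k (n + 2) with h | h
      · obtain ⟨l', rfl⟩ : ∃ l', l = l' + 1 := ⟨l - 1, by omega⟩
        have : bb s (n + 1) k = s (n + 2) (n + 1) (bb s n k) := by
          show chain s (k - 1) (n + 1) (lam' 2 1) = _
          rw [chain, if_pos (by omega)]
          rfl
        rw [this, ih k l' (by omega) (by omega) (by omega),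
          s_BW_mid hs (by omega) (by omega) l' (by omega) (by omega)]
      · obtain rfl : k = n + 2 := by omega
        obtain rfl : l = 1 := by omega
        have : bb s (n + 1) (n + 2) = s (n + 2) n (bb s n (n + 1)) := by
          show chain s (n + 2 - 1) (n + 1) (lam' 2 1) = _
          rw [chain, if_neg (by omega)]
          have e : n + 2 - 1 = n + 1 := by omega
          rw [e, chain_ge s n (n + 1) (n + 1 - 1) (by omega) (by omega)]
          rfl
        rw [this, ih (n + 1) 1 (by omega) (by omega) (by omega),
          s_BW_low hs (by omega) (by omega) 1 (by omega)]

lemma lam'_of {n i j : ℕ} (h : VPIdx n (i, j)) :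
    (lam' i j : VP n) = PresentedGroup.of ⟨(i, j), h⟩ := dif_pos h

lemma main {s : ∀ m : ℕ, ℕ → (VP m →* VP (m + 1))} (hs : IsCabling s) :
    ∀ n, Subgroup.closure
      {x : VP (n + 2) | ∃ k : ℕ, 1 ≤ k ∧ k ≤ n + 1 ∧
        (x = aa s n k ∨ x = bb s n k)} = TT s (n + 1) := by
  intro n
  induction n with
  | zero =>
      show _ = (⊤ : Subgroup (VP 2))
      rw [eq_top_iff, ← PresentedGroup.closure_range_of (VPRels 2)]
      refine (Subgroup.closure_le _).2 ?_
      rintro x ⟨g, rfl⟩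
      obtain ⟨⟨i, j⟩, h⟩ := g
      have h' := h
      simp only [VPIdx] at h'
      refine SetLike.mem_coe.2 (Subgroup.subset_closure ?_)
      rcases (by omega : (i = 1 ∧ j = 2) ∨ (i = 2 ∧ j = 1)) with ⟨rfl, rfl⟩ | ⟨rfl, rfl⟩
      · exact ⟨1, le_refl 1, le_refl 1, Or.inl (lam'_of h).symm⟩
      · exact ⟨1, le_refl 1, le_refl 1, Or.inr (lam'_of h).symm⟩
  | succ n ih =>
      have hTT : TT s (n + 2)
          = ⨆ i ∈ Finset.range (n + 2), Subgroup.map (s (n + 2) i) (TT s (n + 1)) := by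
        simp [TT]
      rw [hTT]
      apply le_antisymm
      · refine (Subgroup.closure_le _).2 ?_
        rintro x ⟨k, hk1, hk2, hx | hx⟩
        · refine SetLike.mem_coe.2 ?_
          rcases Nat.lt_or_ge k (n + 2) with h | h
          · have hae : x = s (n + 2) (n + 1) (aa s n k) := by
              rw [hx, aa_eq hs (n + 1) k (n + 3 - k) hk1 (by omega) (by omega),
                aa_eq hs n k (n + 2 - k) hk1 (by omega) (by omega),
                s_AW_mid hs (by omega) (by omega) (n + 2 - k) (by omega) (by omega)]
              congr 1
              omega
            have hmem : aa s n k ∈ TT s (n + 1) := by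
              rw [← ih]
              exact Subgroup.subset_closure ⟨k, hk1, by omega, Or.inl rfl⟩
            exact Subgroup.mem_iSup_of_mem (n + 1)
              (Subgroup.mem_iSup_of_mem (Finset.mem_range.2 (by omega)) ⟨_, hmem, hae.symm⟩)
          · obtain rfl : k = n + 2 := by omega
            have hae : x = s (n + 2) n (aa s n (n + 1)) := by
              rw [hx, aa_eq hs (n + 1) (n + 2) 1 (by omega) (by omega) (by omega),
                aa_eq hs n (n + 1) 1 (by omega) (by omega) (by omega),
                s_AW_low hs (by omega) (by omega) 1 (by omega)]
            have hmem : aa s n (n + 1) ∈ TT s (n + 1) := by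
              rw [← ih]
              exact Subgroup.subset_closure ⟨n + 1, by omega, by omega, Or.inl rfl⟩
            exact Subgroup.mem_iSup_of_mem n
              (Subgroup.mem_iSup_of_mem (Finset.mem_range.2 (by omega)) ⟨_, hmem, hae.symm⟩)
        · refine SetLike.mem_coe.2 ?_
          rcases Nat.lt_or_ge k (n + 2) with h | h
          · have hae : x = s (n + 2) (n + 1) (bb s n k) := by
              rw [hx, bb_eq hs (n + 1) k (n + 3 - k) hk1 (by omega) (by omega),
                bb_eq hs n k (n + 2 - k) hk1 (by omega) (by omega),
                s_BW_mid hs (by omega) (by omega) (n + 2 - k) (by omega) (by omega)]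
              congr 1
              omega
            have hmem : bb s n k ∈ TT s (n + 1) := by
              rw [← ih]
              exact Subgroup.subset_closure ⟨k, hk1, by omega, Or.inr rfl⟩
            exact Subgroup.mem_iSup_of_mem (n + 1)
              (Subgroup.mem_iSup_of_mem (Finset.mem_range.2 (by omega)) ⟨_, hmem, hae.symm⟩)
          · obtain rfl : k = n + 2 := by omega
            have hae : x = s (n + 2) n (bb s n (n + 1)) := by
              rw [hx, bb_eq hs (n + 1) (n + 2) 1 (by omega) (by omega) (by omega),
                bb_eq hs n (n + 1) 1 (by omega) (by omega) (by omega),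
                s_BW_low hs (by omega) (by omega) 1 (by omega)]
            have hmem : bb s n (n + 1) ∈ TT s (n + 1) := by
              rw [← ih]
              exact Subgroup.subset_closure ⟨n + 1, by omega, by omega, Or.inr rfl⟩
            exact Subgroup.mem_iSup_of_mem n
              (Subgroup.mem_iSup_of_mem (Finset.mem_range.2 (by omega)) ⟨_, hmem, hae.symm⟩)
      · refine iSup_le fun i => iSup_le fun hi => ?_
        have hi' : i < n + 2 := Finset.mem_range.1 hi
        rw [← ih, MonoidHom.map_closure]
        refine (Subgroup.closure_le _).2 ?_
        rintro x ⟨y, ⟨k, hk1, hk2, hy | hy⟩, rfl⟩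
        · subst hy
          refine SetLike.mem_coe.2 (Subgroup.subset_closure ?_)
          rcases le_or_gt (i + 1) k with h | h
          · refine ⟨k + 1, by omega, by omega, Or.inl ?_⟩
            rw [aa_eq hs n k (n + 2 - k) hk1 (by omega) (by omega),
              s_AW_low hs (by omega) h (n + 2 - k) (by omega),
              aa_eq hs (n + 1) (k + 1) (n + 2 - k) (by omega) (by omega) (by omega)]
          · refine ⟨k, hk1, by omega, Or.inl ?_⟩
            rw [aa_eq hs n k (n + 2 - k) hk1 (by omega) (by omega),
              s_AW_mid hs (by omega) (by omega) (n + 2 - k) (by omega) (by omega),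
              aa_eq hs (n + 1) k (n + 3 - k) hk1 (by omega) (by omega)]
            congr 1
            omega
        · subst hy
          refine SetLike.mem_coe.2 (Subgroup.subset_closure ?_)
          rcases le_or_gt (i + 1) k with h | h
          · refine ⟨k + 1, by omega, by omega, Or.inr ?_⟩
            rw [bb_eq hs n k (n + 2 - k) hk1 (by omega) (by omega),
              s_BW_low hs (by omega) h (n + 2 - k) (by omega),
              bb_eq hs (n + 1) (k + 1) (n + 2 - k) (by omega) (by omega) (by omega)]
          · refine ⟨k, hk1, by omega, Or.inr ?_⟩
            rw [bb_eq hs n k (n + 2 - k) hk1 (by omega) (by omega),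
              s_BW_mid hs (by omega) (by omega) (n + 2 - k) (by omega) (by omega),
              bb_eq hs (n + 1) k (n + 3 - k) hk1 (by omega) (by omega)]
            congr 1
            omega

end CabledAux

/-- (Proposition 3.3(1).) For `n = m + 3 ≥ 3`, the subgroup
`T_{n-1}` of `VP n` defined recursively by `T_1 = VP 2`,
`T_{p+1} = ⟨s_0(T_p), …, s_p(T_p)⟩`, coincides with the subgroup generated by the
cabled elements `a_{k,l}, b_{k,l}` with `k + l = n`. -/
theorem T_eq_closure_cabled (s : ∀ m : ℕ, ℕ → (VP m →* VP (m + 1)))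
    (hs : IsCabling s) (m : ℕ) :
    Subgroup.closure
      {x : VP (m + 3) | ∃ k : ℕ, 1 ≤ k ∧ k ≤ m + 2 ∧
        (x = aa s (m + 1) k ∨ x = bb s (m + 1) k)} = TT s (m + 2) := by
  exact CabledAux.main hs (m + 1)
end

section
/- For n ≥ 2, the group VP_n is generated by the elements a_{k,l} and b_{k,l} with 2 ≤ k + l ≤ n and 1 ≤ k, l ≤ n−1, where elements a_{k,l}, b_{k,l} ∈ VP_{k+l} with k + l < n are regarded as elements of VP_n via the inclusion adding trivial strands at the end. -/
namespace CabledAux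

/-- Column product `λ_{1c} λ_{2c} ⋯ λ_{kc}`. -/
def colA {n : ℕ} : ℕ → ℕ → VP n
  | 0, _ => 1
  | k + 1, c => colA k c * lam' (k + 1) c

/-- Column product `λ_{ck} λ_{c,k-1} ⋯ λ_{c1}`. -/
def colB {n : ℕ} : ℕ → ℕ → VP n
  | 0, _ => 1
  | k + 1, c => lam' c (k + 1) * colB k c

/-- `colA k (k+l) * colA k (k+l-1) * ⋯ * colA k (k+1)` (closed form of `a_{k,l}`). -/
def bigA {n : ℕ} (k : ℕ) : ℕ → VP n
  | 0 => 1
  | l + 1 => colA k (k + l + 1) * bigA k l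

/-- `colB k (k+1) * colB k (k+2) * ⋯ * colB k (k+l)` (closed form of `b_{k,l}`). -/
def bigB {n : ℕ} (k : ℕ) : ℕ → VP n
  | 0 => 1
  | l + 1 => bigB k l * colB k (k + l + 1)

lemma rangeA {n : ℕ} (c : ℕ) :
    ∀ t, (((List.range t).map fun j => (lam' (j + 1) c : VP n)).prod) = colA t c
  | 0 => rfl
  | t + 1 => by
      rw [List.range_succ, List.map_append, List.prod_append, rangeA c t]
      simp [colA]

lemma rangeB {n : ℕ} (c : ℕ) :
    ∀ t, (((List.range t).map fun j => ((lam' c (j + 1))⁻¹ : VP n)).prod) = (colB t c)⁻¹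
  | 0 => by simp [colB]
  | t + 1 => by
      rw [List.range_succ, List.map_append, List.prod_append, rangeB c t]
      simp [colB, mul_inv_rev]

lemma conjA_eq_s13 {n : ℕ} (a c : ℕ) : (conjA a c : VP n) = colA (a - 1) c :=
  rangeA c (a - 1)

lemma conjB_eq_s13 {n : ℕ} (a c : ℕ) : (conjB a c : VP n) = (colB (a - 1) c)⁻¹ :=
  rangeB c (a - 1)

section S

variable {s : ∀ m : ℕ, ℕ → (VP m →* VP (m + 1))}

lemma sfix1 (hs : IsCabling s) (m i a b : ℕ) (h1 : 1 ≤ a) (h2 : a < b)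
    (h3 : b ≤ i) (h4 : i < m) : s m i (lam' a b) = lam' a b := by
  rw [(hs m a b i h1 h2 (by omega) h4).1]
  split_ifs <;> first | rfl | omega

lemma sfix2 (hs : IsCabling s) (m i a b : ℕ) (h1 : 1 ≤ a) (h2 : a < b)
    (h3 : b ≤ i) (h4 : i < m) : s m i (lam' b a) = lam' b a := by
  rw [(hs m a b i h1 h2 (by omega) h4).2]
  split_ifs <;> first | rfl | omega

lemma smid1 (hs : IsCabling s) (m i a b : ℕ) (h1 : 1 ≤ a) (h2 : a < b)
    (h3 : a ≤ i) (h5 : i + 1 < b) (hb : b ≤ m) (h4 : i < m) :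
    s m i (lam' a b) = lam' a (b + 1) := by
  rw [(hs m a b i h1 h2 hb h4).1]
  split_ifs <;> first | rfl | omega

lemma smid2 (hs : IsCabling s) (m i a b : ℕ) (h1 : 1 ≤ a) (h2 : a < b)
    (h3 : a ≤ i) (h5 : i + 1 < b) (hb : b ≤ m) (h4 : i < m) :
    s m i (lam' b a) = lam' (b + 1) a := by
  rw [(hs m a b i h1 h2 hb h4).2]
  split_ifs <;> first | rfl | omega

lemma seqk1 (hs : IsCabling s) (m i a b : ℕ) (h1 : 1 ≤ a) (h2 : a < b)
    (h3 : i + 1 = a) (hb : b ≤ m) (h4 : i < m) :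
    s m i (lam' a b) = lam' a (b + 1) * lam' (a + 1) (b + 1) := by
  rw [(hs m a b i h1 h2 hb h4).1, if_neg (by omega), if_pos (by omega)]

lemma seqk2 (hs : IsCabling s) (m i a b : ℕ) (h1 : 1 ≤ a) (h2 : a < b)
    (h3 : i + 1 = a) (hb : b ≤ m) (h4 : i < m) :
    s m i (lam' b a) = lam' (b + 1) (a + 1) * lam' (b + 1) a := by
  rw [(hs m a b i h1 h2 hb h4).2, if_neg (by omega), if_pos (by omega)]

lemma seql1 (hs : IsCabling s) (m i a b : ℕ) (h1 : 1 ≤ a) (h2 : a < b)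
    (h3 : i + 1 = b) (hb : b ≤ m) (h4 : i < m) :
    s m i (lam' a b) = (colA (a - 1) b)⁻¹ * lam' a (b + 1) * colA (a - 1) b * lam' a b := by
  rw [(hs m a b i h1 h2 hb h4).1, if_neg (by omega), if_neg (by omega),
    if_neg (by omega), if_pos (by omega), conjA_eq_s13]

lemma seql2 (hs : IsCabling s) (m i a b : ℕ) (h1 : 1 ≤ a) (h2 : a < b)
    (h3 : i + 1 = b) (hb : b ≤ m) (h4 : i < m) :
    s m i (lam' b a) = lam' b a * (colB (a - 1) b * lam' (b + 1) a * (colB (a - 1) b)⁻¹) := by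
  rw [(hs m a b i h1 h2 hb h4).2, if_neg (by omega), if_neg (by omega),
    if_neg (by omega), if_pos (by omega), conjB_eq_s13, inv_inv]

lemma TA (hs : IsCabling s) (m : ℕ) :
    ∀ j, j ≤ m + 1 → s (m + 2) (m + 1) (colA j (m + 2)) = colA j (m + 3) * colA j (m + 2)
  | 0, _ => by simp [colA]
  | j + 1, hj => by
      rw [colA, map_mul, TA hs m j (by omega),
        seql1 hs (m + 2) (m + 1) (j + 1) (m + 2) (by omega) (by omega) (by omega) (by omega)
          (by omega)]
      simp only [Nat.add_sub_cancel, colA]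
      group

lemma TB (hs : IsCabling s) (m : ℕ) :
    ∀ j, j ≤ m + 1 → s (m + 2) (m + 1) (colB j (m + 2)) = colB j (m + 2) * colB j (m + 3)
  | 0, _ => by simp [colB]
  | j + 1, hj => by
      rw [colB, map_mul, TB hs m j (by omega),
        seql2 hs (m + 2) (m + 1) (j + 1) (m + 2) (by omega) (by omega) (by omega) (by omega)
          (by omega)]
      simp only [Nat.add_sub_cancel, colB]
      group

lemma FA (hs : IsCabling s) (m c : ℕ) (hc : c ≤ m + 1) :
    ∀ j, j < c → s (m + 2) (m + 1) (colA j c) = colA j c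
  | 0, _ => map_one _
  | j + 1, hj => by
      rw [colA, map_mul, FA hs m c hc j (by omega),
        sfix1 hs (m + 2) (m + 1) (j + 1) c (by omega) (by omega) (by omega) (by omega)]
      rfl

lemma FB (hs : IsCabling s) (m c : ℕ) (hc : c ≤ m + 1) :
    ∀ j, j < c → s (m + 2) (m + 1) (colB j c) = colB j c
  | 0, _ => map_one _
  | j + 1, hj => by
      rw [colB, map_mul, FB hs m c hc j (by omega),
        sfix2 hs (m + 2) (m + 1) (j + 1) c (by omega) (by omega) (by omega) (by omega)]
      rfl

lemma GAaux (hs : IsCabling s) (m : ℕ) :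
    ∀ j, j ≤ m → s (m + 2) m (colA j (m + 2)) = colA j (m + 3)
  | 0, _ => map_one _
  | j + 1, hj => by
      rw [colA, map_mul, GAaux hs m j (by omega),
        smid1 hs (m + 2) m (j + 1) (m + 2) (by omega) (by omega) (by omega) (by omega)
          (by omega) (by omega)]
      rfl

lemma GBaux (hs : IsCabling s) (m : ℕ) :
    ∀ j, j ≤ m → s (m + 2) m (colB j (m + 2)) = colB j (m + 3)
  | 0, _ => map_one _
  | j + 1, hj => by
      rw [colB, map_mul, GBaux hs m j (by omega),
        smid2 hs (m + 2) m (j + 1) (m + 2) (by omega) (by omega) (by omega) (by omega)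
          (by omega) (by omega)]
      rfl

lemma GA (hs : IsCabling s) (m : ℕ) :
    s (m + 2) m (colA (m + 1) (m + 2)) = colA (m + 2) (m + 3) := by
  rw [colA, map_mul, GAaux hs m m le_rfl,
    seqk1 hs (m + 2) m (m + 1) (m + 2) (by omega) (by omega) rfl (by omega) (by omega)]
  simp only [colA]
  group

lemma GB (hs : IsCabling s) (m : ℕ) :
    s (m + 2) m (colB (m + 1) (m + 2)) = colB (m + 2) (m + 3) := by
  rw [colB, map_mul, GBaux hs m m le_rfl,
    seqk2 hs (m + 2) m (m + 1) (m + 2) (by omega) (by omega) rfl (by omega) (by omega)]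
  simp only [colB]
  group

lemma SAfix (hs : IsCabling s) (m k : ℕ) (hk : 1 ≤ k) :
    ∀ l, k + l ≤ m + 1 → s (m + 2) (m + 1) (bigA k l) = bigA k l
  | 0, _ => map_one _
  | l + 1, h => by
      rw [bigA, map_mul, FA hs m (k + l + 1) (by omega) k (by omega),
        SAfix hs m k hk l (by omega)]
      rfl

lemma SBfix (hs : IsCabling s) (m k : ℕ) (hk : 1 ≤ k) :
    ∀ l, k + l ≤ m + 1 → s (m + 2) (m + 1) (bigB k l) = bigB k l
  | 0, _ => map_one _
  | l + 1, h => by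
      rw [bigB, map_mul, FB hs m (k + l + 1) (by omega) k (by omega),
        SBfix hs m k hk l (by omega)]
      rfl

lemma SAtop (hs : IsCabling s) (m k l : ℕ) (hk : 1 ≤ k) (h : k + l + 1 = m + 2) :
    s (m + 2) (m + 1) (bigA k (l + 1)) = bigA k (l + 2) := by
  rw [bigA, show k + l + 1 = m + 2 from h, map_mul, SAfix hs m k hk l (by omega),
    TA hs m k (by omega)]
  rw [show (l:ℕ) + 2 = (l + 1) + 1 from rfl, bigA, bigA,
    show k + (l + 1) + 1 = m + 3 from by omega, show k + l + 1 = m + 2 from h, mul_assoc]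

lemma SBtop (hs : IsCabling s) (m k l : ℕ) (hk : 1 ≤ k) (h : k + l + 1 = m + 2) :
    s (m + 2) (m + 1) (bigB k (l + 1)) = bigB k (l + 2) := by
  rw [bigB, show k + l + 1 = m + 2 from h, map_mul, SBfix hs m k hk l (by omega),
    TB hs m k (by omega)]
  rw [show (l:ℕ) + 2 = (l + 1) + 1 from rfl, bigB, bigB,
    show k + (l + 1) + 1 = m + 3 from by omega, show k + l + 1 = m + 2 from h, mul_assoc]

lemma chainA (hs : IsCabling s) (k : ℕ) (hk : 1 ≤ k) :
    ∀ m, chain s (k - 1) m (lam' 1 2) =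
      if m + 1 ≤ k then colA (m + 1) (m + 2) else bigA k (m + 2 - k)
  | 0 => by
      rw [if_pos (by omega)]
      simp [chain, colA]
  | m + 1 => by
      have e : chain s (k - 1) (m + 1) (lam' 1 2)
          = s (m + 2) (if k - 1 ≤ m then m + 1 else m) (chain s (k - 1) m (lam' 1 2)) := rfl
      rw [e, chainA hs k hk m]
      by_cases h1 : k - 1 ≤ m
      · rw [if_pos h1]
        by_cases h2 : m + 1 ≤ k
        · have hk2 : k = m + 1 := by omega
          subst hk2
          rw [if_pos le_rfl, if_neg (by omega), TA hs m (m + 1) le_rfl,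
            show m + 1 + 2 - (m + 1) = 0 + 2 from by omega]
          rw [show (0:ℕ) + 2 = 1 + 1 from rfl, bigA, bigA, bigA]
          simp only [show m + 1 + 1 + 1 = m + 3 from rfl, show m + 1 + 0 + 1 = m + 2 from by
            omega, mul_one]
        · rw [if_neg h2, if_neg (by omega),
            show m + 2 - k = (m + 1 - k) + 1 from by omega,
            SAtop hs m k (m + 1 - k) hk (by omega),
            show m + 1 + 2 - k = (m + 1 - k) + 2 from by omega]
      · rw [if_neg h1, if_pos (by omega), if_pos (by omega)]
        exact GA hs m

lemma chainB (hs : IsCabling s) (k : ℕ) (hk : 1 ≤ k) :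
    ∀ m, chain s (k - 1) m (lam' 2 1) =
      if m + 1 ≤ k then colB (m + 1) (m + 2) else bigB k (m + 2 - k)
  | 0 => by
      rw [if_pos (by omega)]
      simp [chain, colB]
  | m + 1 => by
      have e : chain s (k - 1) (m + 1) (lam' 2 1)
          = s (m + 2) (if k - 1 ≤ m then m + 1 else m) (chain s (k - 1) m (lam' 2 1)) := rfl
      rw [e, chainB hs k hk m]
      by_cases h1 : k - 1 ≤ m
      · rw [if_pos h1]
        by_cases h2 : m + 1 ≤ k
        · have hk2 : k = m + 1 := by omega
          subst hk2
          rw [if_pos le_rfl, if_neg (by omega), TB hs m (m + 1) le_rfl,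
            show m + 1 + 2 - (m + 1) = 0 + 2 from by omega]
          rw [show (0:ℕ) + 2 = 1 + 1 from rfl, bigB, bigB, bigB]
          simp only [show m + 1 + 1 + 1 = m + 3 from rfl, show m + 1 + 0 + 1 = m + 2 from by
            omega, one_mul]
        · rw [if_neg h2, if_neg (by omega),
            show m + 2 - k = (m + 1 - k) + 1 from by omega,
            SBtop hs m k (m + 1 - k) hk (by omega),
            show m + 1 + 2 - k = (m + 1 - k) + 2 from by omega]
      · rw [if_neg h1, if_pos (by omega), if_pos (by omega)]
        exact GB hs m

lemma aaEq (hs : IsCabling s) (m k : ℕ) (hk : 1 ≤ k) (hk2 : k ≤ m + 1) :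
    aa s m k = bigA k (m + 2 - k) := by
  unfold aa
  rw [chainA hs k hk m]
  by_cases h : m + 1 ≤ k
  · have hk3 : k = m + 1 := by omega
    subst hk3
    rw [if_pos le_rfl, show m + 2 - (m + 1) = 0 + 1 from by omega, bigA, bigA,
      show m + 1 + 0 + 1 = m + 2 from by omega, mul_one]
  · rw [if_neg h]

lemma bbEq (hs : IsCabling s) (m k : ℕ) (hk : 1 ≤ k) (hk2 : k ≤ m + 1) :
    bb s m k = bigB k (m + 2 - k) := by
  unfold bb
  rw [chainB hs k hk m]
  by_cases h : m + 1 ≤ k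
  · have hk3 : k = m + 1 := by omega
    subst hk3
    rw [if_pos le_rfl, show m + 2 - (m + 1) = 0 + 1 from by omega, bigB, bigB,
      show m + 1 + 0 + 1 = m + 2 from by omega, one_mul]
  · rw [if_neg h]

end S

section I

variable {ι : ∀ m : ℕ, VP m →* VP (m + 1)}

lemma incl_colA (hι : IsIncl ι) (m c : ℕ) (hc1 : 1 ≤ c) (hc2 : c ≤ m) :
    ∀ j, j < c → ι m (colA j c) = colA j c
  | 0, _ => map_one _
  | j + 1, hj => by
      rw [colA, map_mul, incl_colA hι m c hc1 hc2 j (by omega),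
        hι m (j + 1) c ⟨by omega, by omega, by omega, by omega, by omega⟩]
      rfl

lemma incl_colB (hι : IsIncl ι) (m c : ℕ) (hc1 : 1 ≤ c) (hc2 : c ≤ m) :
    ∀ j, j < c → ι m (colB j c) = colB j c
  | 0, _ => map_one _
  | j + 1, hj => by
      rw [colB, map_mul, incl_colB hι m c hc1 hc2 j (by omega),
        hι m c (j + 1) ⟨by omega, by omega, by omega, by omega, by omega⟩]
      rfl

lemma incl_bigA (hι : IsIncl ι) (m k : ℕ) (hk : 1 ≤ k) :
    ∀ l, k + l ≤ m → ι m (bigA k l) = bigA k l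
  | 0, _ => map_one _
  | l + 1, h => by
      rw [bigA, map_mul, incl_colA hι m (k + l + 1) (by omega) (by omega) k (by omega),
        incl_bigA hι m k hk l (by omega)]
      rfl

lemma incl_bigB (hι : IsIncl ι) (m k : ℕ) (hk : 1 ≤ k) :
    ∀ l, k + l ≤ m → ι m (bigB k l) = bigB k l
  | 0, _ => map_one _
  | l + 1, h => by
      rw [bigB, map_mul, incl_colB hι m (k + l + 1) (by omega) (by omega) k (by omega),
        incl_bigB hι m k hk l (by omega)]
      rfl

lemma iotaIter_bigA (hι : IsIncl ι) (p k l : ℕ) (hk : 1 ≤ k) (h : k + l ≤ p) :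
    ∀ q, iotaIter ι p q (bigA k l) = bigA k l
  | 0 => rfl
  | q + 1 => by
      have e : iotaIter ι p (q + 1) (bigA k l) = ι (p + q) (iotaIter ι p q (bigA k l)) := rfl
      rw [e, iotaIter_bigA hι p k l hk h q, incl_bigA hι (p + q) k hk l (by omega)]

lemma iotaIter_bigB (hι : IsIncl ι) (p k l : ℕ) (hk : 1 ≤ k) (h : k + l ≤ p) :
    ∀ q, iotaIter ι p q (bigB k l) = bigB k l
  | 0 => rfl
  | q + 1 => by
      have e : iotaIter ι p (q + 1) (bigB k l) = ι (p + q) (iotaIter ι p q (bigB k l)) := rfl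
      rw [e, iotaIter_bigB hι p k l hk h q, incl_bigB hι (p + q) k hk l (by omega)]

end I

lemma bigA_heq {n1 n2 : ℕ} (h : n1 = n2) (k l : ℕ) :
    HEq (bigA (n := n1) k l) (bigA (n := n2) k l) := by subst h; rfl

lemma bigB_heq {n1 n2 : ℕ} (h : n1 = n2) (k l : ℕ) :
    HEq (bigB (n := n1) k l) (bigB (n := n2) k l) := by subst h; rfl

end CabledAux

/-- (Proposition 3.3(2).) For `n ≥ 2`, the group `VP n` is generated
by the cabled elements `a_{k,l}` and `b_{k,l}` with `2 ≤ k + l ≤ n`, `1 ≤ k, l`,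
where elements of `VP (k+l)` are regarded in `VP n` via the iterated trivial-strand
inclusion (here `k + l = j + 2`, `1 ≤ k ≤ j + 1`). -/
theorem VP_generated_by_cabled (s : ∀ m : ℕ, ℕ → (VP m →* VP (m + 1)))
    (ι : ∀ m : ℕ, VP m →* VP (m + 1)) (hs : IsCabling s) (hι : IsIncl ι)
    (n : ℕ) (hn : 2 ≤ n) :
    Subgroup.closure
      {x : VP n | ∃ j k : ℕ, 1 ≤ k ∧ k ≤ j + 1 ∧ j + 2 ≤ n ∧
        (HEq x (iotaIter ι (j + 2) (n - (j + 2)) (aa s j k)) ∨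
         HEq x (iotaIter ι (j + 2) (n - (j + 2)) (bb s j k)))} = ⊤ := by
  classical
  open CabledAux in
  set S : Set (VP n) :=
    {x : VP n | ∃ j k : ℕ, 1 ≤ k ∧ k ≤ j + 1 ∧ j + 2 ≤ n ∧
        (HEq x (iotaIter ι (j + 2) (n - (j + 2)) (aa s j k)) ∨
         HEq x (iotaIter ι (j + 2) (n - (j + 2)) (bb s j k)))} with hSdef
  have haMem : ∀ k l : ℕ, 1 ≤ k → 1 ≤ l → k + l ≤ n →
      (bigA k l : VP n) ∈ Subgroup.closure S := by
    intro k l hk hl hkl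
    apply Subgroup.subset_closure
    refine ⟨k + l - 2, k, hk, by omega, by omega, Or.inl ?_⟩
    have h1 : aa s (k + l - 2) k = bigA k l := by
      rw [aaEq hs _ k hk (by omega), show k + l - 2 + 2 - k = l from by omega]
    have h2 : iotaIter ι (k + l - 2 + 2) (n - (k + l - 2 + 2)) (aa s (k + l - 2) k)
        = bigA k l := by
      rw [h1, iotaIter_bigA hι _ k l hk (by omega)]
    exact (bigA_heq (by omega) k l).trans (heq_of_eq h2.symm)
  have hbMem : ∀ k l : ℕ, 1 ≤ k → 1 ≤ l → k + l ≤ n →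
      (bigB k l : VP n) ∈ Subgroup.closure S := by
    intro k l hk hl hkl
    apply Subgroup.subset_closure
    refine ⟨k + l - 2, k, hk, by omega, by omega, Or.inr ?_⟩
    have h1 : bb s (k + l - 2) k = bigB k l := by
      rw [bbEq hs _ k hk (by omega), show k + l - 2 + 2 - k = l from by omega]
    have h2 : iotaIter ι (k + l - 2 + 2) (n - (k + l - 2 + 2)) (bb s (k + l - 2) k)
        = bigB k l := by
      rw [h1, iotaIter_bigB hι _ k l hk (by omega)]
    exact (bigB_heq (by omega) k l).trans (heq_of_eq h2.symm)
  have hcolA : ∀ k c : ℕ, k < c → c ≤ n → (colA k c : VP n) ∈ Subgroup.closure S := by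
    intro k c hkc hc
    rcases Nat.eq_zero_or_pos k with rfl | hk
    · simpa [colA] using one_mem _
    · obtain ⟨l, rfl⟩ : ∃ l, c = k + l + 1 := ⟨c - k - 1, by omega⟩
      have he : (colA k (k + l + 1) : VP n) = bigA k (l + 1) * (bigA k l)⁻¹ := by
        rw [bigA]; group
      rw [he]
      refine mul_mem (haMem k (l + 1) hk (by omega) (by omega)) (inv_mem ?_)
      rcases Nat.eq_zero_or_pos l with rfl | hl
      · simpa [bigA] using one_mem _
      · exact haMem k l hk hl (by omega)
  have hcolB : ∀ k c : ℕ, k < c → c ≤ n → (colB k c : VP n) ∈ Subgroup.closure S := by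
    intro k c hkc hc
    rcases Nat.eq_zero_or_pos k with rfl | hk
    · simpa [colB] using one_mem _
    · obtain ⟨l, rfl⟩ : ∃ l, c = k + l + 1 := ⟨c - k - 1, by omega⟩
      have he : (colB k (k + l + 1) : VP n) = (bigB k l)⁻¹ * bigB k (l + 1) := by
        rw [bigB]; group
      rw [he]
      refine mul_mem (inv_mem ?_) (hbMem k (l + 1) hk (by omega) (by omega))
      rcases Nat.eq_zero_or_pos l with rfl | hl
      · simpa [bigB] using one_mem _
      · exact hbMem k l hk hl (by omega)
  have hlam : ∀ i j : ℕ, VPIdx n (i, j) → (lam' i j : VP n) ∈ Subgroup.closure S := by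
    intro i j h
    obtain ⟨hi1, hi2, hj1, hj2, hij⟩ := h
    rcases lt_or_gt_of_ne hij with hlt | hgt
    · obtain ⟨i', rfl⟩ : ∃ i', i = i' + 1 := ⟨i - 1, by omega⟩
      have he : (lam' (i' + 1) j : VP n) = (colA i' j)⁻¹ * colA (i' + 1) j := by
        rw [colA]; group
      rw [he]
      exact mul_mem (inv_mem (hcolA i' j (by omega) hj2)) (hcolA (i' + 1) j hlt hj2)
    · obtain ⟨j', rfl⟩ : ∃ j', j = j' + 1 := ⟨j - 1, by omega⟩
      have he : (lam' i (j' + 1) : VP n) = colB (j' + 1) i * (colB j' i)⁻¹ := by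
        rw [colB]; group
      rw [he]
      exact mul_mem (hcolB (j' + 1) i hgt hi2) (inv_mem (hcolB j' i (by omega) hi2))
  rw [eq_top_iff, ← PresentedGroup.closure_range_of (VPRels n), Subgroup.closure_le]
  rintro x ⟨⟨⟨i, j⟩, hij⟩, rfl⟩
  have he : (PresentedGroup.of ⟨(i, j), hij⟩ : VP n) = lam' i j := by
    rw [lam', dif_pos hij]
  exact he ▸ hlam i j hij
end

section
/- For n ≥ 2, VP_{n+1} is generated by VP_n together with the images s_0(VP_n), s_1(VP_n), …, s_{n-1}(VP_n), where VP_n ≤ VP_{n+1} via the inclusion adding a trivial strand at the end and s_i : VP_n → VP_{n+1} are the strand-doubling homomorphisms. -/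
/-- (Proposition 3.3(3).) For `n ≥ 2`,
`VP (n+1) = ⟨VP n, s_0(VP n), s_1(VP n), …, s_{n-1}(VP n)⟩`, where `VP n ≤ VP (n+1)`
via the trivial-strand inclusion `ι` and `s_i` are the strand-doubling homomorphisms. -/
theorem VP_succ_generated (s : ∀ m : ℕ, ℕ → (VP m →* VP (m + 1)))
    (ι : ∀ m : ℕ, VP m →* VP (m + 1)) (hs : IsCabling s) (hι : IsIncl ι)
    (n : ℕ) (hn : 2 ≤ n) :
    ((ι n).range ⊔ ⨆ i ∈ Finset.range n, (s n i).range) = (⊤ : Subgroup (VP (n + 1))) := by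

  set H : Subgroup (VP (n + 1)) :=
    (ι n).range ⊔ ⨆ i ∈ Finset.range n, (s n i).range with hHdef
  have hι' : ∀ i j : ℕ, VPIdx n (i, j) → (lam' i j : VP (n + 1)) ∈ H := by
    intro i j h
    have h1 : (ι n).range ≤ H := le_sup_left
    exact h1 ⟨lam' i j, hι n i j h⟩
  have hsH : ∀ i : ℕ, i < n → ∀ x : VP n, s n i x ∈ H := by
    intro i hi x
    have h1 : (s n i).range ≤ H :=
      le_sup_of_le_right (le_iSup₂_of_le i (Finset.mem_range.mpr hi) le_rfl)
    exact h1 ⟨x, rfl⟩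
  have hconjA : ∀ k : ℕ, k ≤ n → (conjA k n : VP (n + 1)) ∈ H := by
    intro k hk
    apply Subgroup.list_prod_mem
    intro x hx
    simp only [List.mem_map, List.mem_range] at hx
    obtain ⟨j, hj, rfl⟩ := hx
    exact hι' _ _ ⟨by omega, by omega, by omega, by omega, by omega⟩
  have hconjB : ∀ k : ℕ, k ≤ n → (conjB k n : VP (n + 1)) ∈ H := by
    intro k hk
    apply Subgroup.list_prod_mem
    intro x hx
    simp only [List.mem_map, List.mem_range] at hx
    obtain ⟨j, hj, rfl⟩ := hx
    exact inv_mem (hι' _ _ ⟨by omega, by omega, by omega, by omega, by omega⟩)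
  have key : ∀ k : ℕ, 1 ≤ k → k < n →
      (lam' k (n + 1) : VP (n + 1)) ∈ H ∧ (lam' (n + 1) k : VP (n + 1)) ∈ H := by
    intro k hk1 hk2
    obtain ⟨e1, e2⟩ := hs n k n (n - 1) hk1 hk2 le_rfl (by omega)
    rw [if_neg (by omega), if_neg (by omega), if_neg (by omega), if_pos (by omega)] at e1 e2
    have hkn : VPIdx n (k, n) := ⟨by omega, by omega, by omega, by omega, by omega⟩
    have hnk : VPIdx n (n, k) := ⟨by omega, by omega, by omega, by omega, by omega⟩
    constructor
    · have hX : (lam' k (n + 1) : VP (n + 1)) =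
          conjA k n * (s n (n - 1) (lam' k n)) * (lam' k n)⁻¹ * (conjA k n)⁻¹ := by
        rw [e1]; group
      rw [hX]
      exact mul_mem (mul_mem (mul_mem (hconjA k (by omega)) (hsH _ (by omega) _))
        (inv_mem (hι' k n hkn))) (inv_mem (hconjA k (by omega)))
    · have hX : (lam' (n + 1) k : VP (n + 1)) =
          conjB k n * (lam' n k)⁻¹ * (s n (n - 1) (lam' n k)) * (conjB k n)⁻¹ := by
        rw [e2]; group
      rw [hX]
      exact mul_mem (mul_mem (mul_mem (hconjB k (by omega)) (inv_mem (hι' n k hnk)))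
        (hsH _ (by omega) _)) (inv_mem (hconjB k (by omega)))
  have keytop : (lam' n (n + 1) : VP (n + 1)) ∈ H ∧ (lam' (n + 1) n : VP (n + 1)) ∈ H := by
    obtain ⟨e1, e2⟩ := hs n (n - 1) n (n - 2) (by omega) (by omega) le_rfl (by omega)
    rw [if_neg (by omega), if_pos (by omega)] at e1 e2
    have h1 := key (n - 1) (by omega) (by omega)
    constructor
    · have hX : (lam' n (n + 1) : VP (n + 1)) =
          (lam' (n - 1) (n + 1))⁻¹ * (s n (n - 2) (lam' (n - 1) n)) := by
        rw [e1]
        have : n - 1 + 1 = n := by omega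
        rw [this]; group
      rw [hX]
      exact mul_mem (inv_mem h1.1) (hsH _ (by omega) _)
    · have hX : (lam' (n + 1) n : VP (n + 1)) =
          (s n (n - 2) (lam' n (n - 1))) * (lam' (n + 1) (n - 1))⁻¹ := by
        rw [e2]
        have : n - 1 + 1 = n := by omega
        rw [this]; group
      rw [hX]
      exact mul_mem (hsH _ (by omega) _) (inv_mem h1.2)
  rw [eq_top_iff, ← PresentedGroup.closure_range_of (VPRels (n + 1))]
  apply Subgroup.closure_le H |>.mpr
  rintro _ ⟨p, rfl⟩
  obtain ⟨⟨i, j⟩, hp⟩ := p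
  have hof : (PresentedGroup.of ⟨(i, j), hp⟩ : VP (n + 1)) = lam' i j := by
    rw [lam', dif_pos hp]
  rw [hof]
  obtain ⟨hi1, hi2, hj1, hj2, hij⟩ := hp
  by_cases hi : i ≤ n
  · by_cases hj : j ≤ n
    · exact hι' i j ⟨hi1, hi, hj1, hj, hij⟩
    · have hj' : j = n + 1 := by omega
      subst hj'
      rcases eq_or_lt_of_le hi with h | h
      · exact h ▸ keytop.1
      · exact (key i hi1 h).1
  · have hi' : i = n + 1 := by omega
    subst hi'
    have hj : j ≤ n := by omega
    rcases eq_or_lt_of_le hj with h | h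
    · exact h ▸ keytop.2
    · exact (key j hj1 h).2
end
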